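/- arXiv:1805.04100 — 2 statements merged into one kernel-verified Lean document; each statement's English description precedes it below -/
import Mathlib

section
/- Every map P : X → Y of semi-simplicial spaces can be factored as a level equivalence X → X^f followed by a Reedy fibration X^f → Y. -/
open scoped unitInterval Topology.Homotopy

noncomputable section LTGCore

universe u v w

/-! ### Core homotopy-theoretic notions -/

/-- The induced map on path components. -/
def pi0Map {X : Type u} {Y : Type v} [TopologicalSpace X] [TopologicalSpace Y]
    (f : X → Y) (hf : Continuous f) : ZerothHomotopy X → ZerothHomotopy Y :=
  Quotient.map f (fun _ _ h => h.elim (fun γ => ⟨γ.map hf⟩))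

/-- Post-composition of a generalized loop with a continuous map. -/
def GenLoop.push {X : Type u} {Y : Type v} [TopologicalSpace X] [TopologicalSpace Y]
    {N : Type} (f : C(X, Y)) {x : X} (g : GenLoop N X x) : GenLoop N Y (f x) :=
  ⟨f.comp g.1, fun y hy => by
    have := g.2 y hy
    simp [this]⟩

/-- The induced map on homotopy groups $\pi_n$ (for the cube indexed by `N`). -/
def homotopyGroupMap {X : Type u} {Y : Type v} [TopologicalSpace X] [TopologicalSpace Y]
    (N : Type) (f : C(X, Y)) (x : X) :
    HomotopyGroup N X x → HomotopyGroup N Y (f x) :=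
  Quotient.map (GenLoop.push f)
    (fun g h H => by
      obtain ⟨K⟩ := H
      exact ⟨{ toHomotopy := (ContinuousMap.Homotopy.refl f).comp K.toHomotopy
               prop' := fun t y hy => by
                  have h1 : K (t, y) = g.1 y := K.prop t y hy
                  show f (K (t, y)) = f (g.1 y)
                  rw [h1] }⟩)

/-- A continuous map is a weak homotopy equivalence if it induces a bijection on path
components and on all homotopy groups with arbitrary base points. -/
def IsWeakHomotopyEquiv {X : Type u} {Y : Type v} [TopologicalSpace X] [TopologicalSpace Y]
    (f : X → Y) : Prop :=
  ∃ hf : Continuous f,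
    Function.Bijective (pi0Map f hf) ∧
    ∀ (n : ℕ) (x : X), Function.Bijective (homotopyGroupMap (Fin n) ⟨f, hf⟩ x)

/-- The standard (mapping path space) homotopy pullback of two maps `f : A → C`, `g : B → C`. -/
def StdHomotopyPullback {A : Type u} {B : Type v} {C : Type w}
    [TopologicalSpace A] [TopologicalSpace B] [TopologicalSpace C]
    (f : A → C) (g : B → C) : Type (max u v w) :=
  { x : A × B × C(I, C) // x.2.2 0 = f x.1 ∧ x.2.2 1 = g x.2.1 }

instance {A : Type u} {B : Type v} {C : Type w}
    [TopologicalSpace A] [TopologicalSpace B] [TopologicalSpace C]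
    (f : A → C) (g : B → C) : TopologicalSpace (StdHomotopyPullback f g) :=
  instTopologicalSpaceSubtype

/-- The canonical comparison map from the corner of a strictly commutative square to the
standard homotopy pullback. -/
def homotopyPullbackCompare {W : Type*} {A : Type u} {B : Type v} {C : Type w}
    [TopologicalSpace W] [TopologicalSpace A] [TopologicalSpace B] [TopologicalSpace C]
    (f : A → C) (g : B → C) (p : W → A) (q : W → B)
    (hcomm : ∀ w, f (p w) = g (q w)) (w : W) : StdHomotopyPullback f g :=
  ⟨(p w, q w, ContinuousMap.const I (f (p w))), rfl, by simpa using hcomm w⟩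

/-- A strictly commutative square of spaces (`f ∘ p = g ∘ q`, with `W` the initial corner)
is a homotopy pullback if the canonical comparison map from `W` to the standard homotopy
pullback of `f` and `g` is a weak homotopy equivalence. -/
def IsHomotopyPullback {W : Type*} {A : Type u} {B : Type v} {C : Type w}
    [TopologicalSpace W] [TopologicalSpace A] [TopologicalSpace B] [TopologicalSpace C]
    (f : A → C) (g : B → C) (p : W → A) (q : W → B) : Prop :=
  Continuous p ∧ Continuous q ∧
  ∃ hcomm : ∀ w, f (p w) = g (q w),
    IsWeakHomotopyEquiv (homotopyPullbackCompare f g p q hcomm)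

/-- The standard homotopy fiber of `g : B → C` over `c₀ : C`. -/
def StdHomotopyFiber {B : Type v} {C : Type w} [TopologicalSpace B] [TopologicalSpace C]
    (g : B → C) (c₀ : C) : Type (max v w) :=
  { x : B × C(I, C) // x.2 0 = g x.1 ∧ x.2 1 = c₀ }

instance {B : Type v} {C : Type w} [TopologicalSpace B] [TopologicalSpace C]
    (g : B → C) (c₀ : C) : TopologicalSpace (StdHomotopyFiber g c₀) :=
  instTopologicalSpaceSubtype

/-- The comparison map into the standard homotopy fiber determined by a homotopy `H`
witnessing that `g ∘ i` is homotopic to the constant map at `c₀`. -/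
def homotopyFiberCompare {A : Type u} {B : Type v} {C : Type w}
    [TopologicalSpace A] [TopologicalSpace B] [TopologicalSpace C]
    (i : A → B) (g : B → C) (c₀ : C) (H : C(A × I, C))
    (h0 : ∀ a, H (a, 0) = g (i a)) (h1 : ∀ a, H (a, 1) = c₀) (a : A) :
    StdHomotopyFiber g c₀ :=
  ⟨(i a, H.curry a), by simpa using h0 a, by simpa using h1 a⟩

/-- `A --i--> B --g--> C` is a homotopy fibration sequence over the point `c₀ : C` if
there is a homotopy from `g ∘ i` to the constant map at `c₀` for which the induced
comparison map from `A` to the standard homotopy fiber of `g` over `c₀` is a weak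
homotopy equivalence. -/
def IsHomotopyFiberSequence {A : Type u} {B : Type v} {C : Type w}
    [TopologicalSpace A] [TopologicalSpace B] [TopologicalSpace C]
    (i : A → B) (g : B → C) (c₀ : C) : Prop :=
  Continuous i ∧ Continuous g ∧
  ∃ (H : C(A × I, C)) (h0 : ∀ a, H (a, 0) = g (i a)) (h1 : ∀ a, H (a, 1) = c₀),
    IsWeakHomotopyEquiv (homotopyFiberCompare i g c₀ H h0 h1)

/-- A map is a Serre fibration if it has the homotopy lifting property with respect to
all cubes. -/
def IsSerreFibration {X : Type u} {Y : Type v} [TopologicalSpace X] [TopologicalSpace Y]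
    (f : X → Y) : Prop :=
  Continuous f ∧
  ∀ (n : ℕ) (H : C((Fin n → I) × I, Y)) (h : C(Fin n → I, X)),
    (∀ a, f (h a) = H (a, 0)) →
    ∃ G : C((Fin n → I) × I, X), (∀ a, G (a, 0) = h a) ∧ ∀ z, f (G z) = H z

/-- A map is surjective on path components. -/
def SurjOnPi0 {X : Type u} {Y : Type v} [TopologicalSpace X] [TopologicalSpace Y]
    (f : X → Y) : Prop :=
  ∀ y : Y, ∃ x : X, Joined (f x) y

end LTGCore

/-! ### Semi-simplicial spaces -/

noncomputable section SemiSimp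

open CategoryTheory

/-- The semi-simplex category: objects are natural numbers (standing for the finite linear
orders `{0,...,n}`), morphisms are strictly monotone (i.e. injective monotone) maps. -/
structure SemiSimplexCat where
  /-- the dimension -/
  len : ℕ

namespace SemiSimplexCat

@[simp]
lemma mk_len (n : ℕ) : (SemiSimplexCat.mk n).len = n := rfl

/-- Morphisms of the semi-simplex category: strictly monotone maps. -/
@[ext]
structure Hom (m n : SemiSimplexCat) where
  /-- the underlying function -/
  toFun : Fin (m.len + 1) → Fin (n.len + 1)
  strictMono : StrictMono toFun

instance : Category SemiSimplexCat where
  Hom := Hom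
  id m := ⟨id, strictMono_id⟩
  comp f g := ⟨g.toFun ∘ f.toFun, g.strictMono.comp f.strictMono⟩

lemma hom_ext {m n : SemiSimplexCat} (f g : m ⟶ n) (h : f.toFun = g.toFun) : f = g :=
  Hom.ext h

/-- The vertex `k`, as a morphism `[0] → [n]`. -/
def vertexHom (n : ℕ) (k : Fin (n + 1)) : (⟨0⟩ : SemiSimplexCat) ⟶ ⟨n⟩ :=
  ⟨fun _ => k, fun a b hab => by
    have ha := a.isLt
    have hb := b.isLt
    rw [Fin.lt_def] at hab
    simp only [mk_len] at ha hb
    omega⟩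

/-- The edge `{k, k+1}`, as a morphism `[1] → [n]`. -/
def edgeHom (n : ℕ) (k : ℕ) (h : k + 1 ≤ n) : (⟨1⟩ : SemiSimplexCat) ⟶ ⟨n⟩ :=
  ⟨fun i => ⟨k + i, by have := i.isLt; simp only [mk_len] at *; omega⟩, fun a b hab => by
    rw [Fin.lt_def] at hab
    simp only [Fin.mk_lt_mk]
    omega⟩

/-- The inclusion of the last `k`-dimensional face, as a morphism `[k] → [n]`. -/
def lastFaceHom (k n : ℕ) (h : k ≤ n) : (⟨k⟩ : SemiSimplexCat) ⟶ ⟨n⟩ :=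
  ⟨fun i => ⟨n - k + i, by have := i.isLt; simp only [mk_len] at *; omega⟩, fun a b hab => by
    rw [Fin.lt_def] at hab
    simp only [Fin.mk_lt_mk]
    omega⟩

/-- The middle face `[1] → [2]` hitting the vertices `0` and `2`. -/
def middleFaceHom : (⟨1⟩ : SemiSimplexCat) ⟶ ⟨2⟩ :=
  ⟨fun i => ⟨2 * i, by have := i.isLt; simp only [mk_len] at *; omega⟩, fun a b hab => by
    rw [Fin.lt_def] at hab
    simp only [Fin.mk_lt_mk]
    omega⟩

/-- The order-reversal endofunctor of the semi-simplex category. -/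
def revFunctor : SemiSimplexCat ⥤ SemiSimplexCat where
  obj n := n
  map {m n} f := ⟨fun i => (f.toFun i.rev).rev, fun a b hab => by
    simp only [Fin.rev_lt_rev]
    exact f.strictMono (by simpa using hab)⟩
  map_id n := by
    apply hom_ext
    funext i
    show (i.rev).rev = i
    exact Fin.rev_rev i
  map_comp f g := by
    apply hom_ext
    funext i
    show ((g.toFun (f.toFun i.rev)).rev : Fin _) =
      (g.toFun (((f.toFun i.rev).rev).rev)).rev
    rw [Fin.rev_rev]

end SemiSimplexCat

/-- A semi-simplicial space: a contravariant functor from the semi-simplex category to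
topological spaces. -/
abbrev SemiSimplicialSpace : Type (u + 1) :=
  SemiSimplexCatᵒᵖ ⥤ TopCat.{u}

namespace SemiSimplicialSpace

open SemiSimplexCat Opposite

variable (X Y : SemiSimplicialSpace.{u})

/-- The space of `n`-simplices. -/
abbrev sp (n : ℕ) : TopCat := X.obj (op ⟨n⟩)

variable {X Y}

lemma map_map {a b c : SemiSimplexCat} (α : a ⟶ b) (β : b ⟶ c) (x : X.obj (op c)) :
    X.map α.op (X.map β.op x) = X.map (α ≫ β).op x := by
  have h : X.map (α ≫ β).op = X.map β.op ≫ X.map α.op := by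
    rw [← X.map_comp]
    rfl
  rw [h, TopCat.comp_app]

lemma natApp {C : Type} [Category C] {X Y : C ⥤ TopCat} (F : X ⟶ Y) {m₁ m₂ : C}
    (φ : m₁ ⟶ m₂) (x : X.obj m₁) :
    F.app m₂ (X.map φ x) = Y.map φ (F.app m₁ x) := by
  have h := ConcreteCategory.congr_hom (F.naturality φ) x
  rw [TopCat.comp_app, TopCat.comp_app] at h
  exact h

lemma naturality_apply (P : X ⟶ Y) {a b : SemiSimplexCat} (α : a ⟶ b) (x : X.obj (op b)) :
    P.app (op a) (X.map α.op x) = Y.map α.op (P.app (op b) x) :=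
  natApp P α.op x

/-- The terminal semi-simplicial space. -/
def terminal : SemiSimplicialSpace.{u} :=
  (Functor.const _).obj (TopCat.of PUnit)

/-- The unique map to the terminal semi-simplicial space. -/
def toTerminal (X : SemiSimplicialSpace.{u}) : X ⟶ terminal where
  app _ := TopCat.ofHom ⟨fun _ => PUnit.unit, continuous_const⟩
  naturality _ _ _ := by
    apply TopCat.ext
    intro x
    rfl

/-- A map of semi-simplicial spaces is a level equivalence if it is a weak homotopy
equivalence in every degree. -/
def IsLevelEquiv (P : X ⟶ Y) : Prop :=
  ∀ n : ℕ, IsWeakHomotopyEquiv (P.app (op ⟨n⟩))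

/-- A map of semi-simplicial spaces is a level fibration if it is a Serre fibration in
every degree. -/
def IsLevelFibration (P : X ⟶ Y) : Prop :=
  ∀ n : ℕ, IsSerreFibration (P.app (op ⟨n⟩))

/-! #### The Segal condition -/

/-- The `n`-fold iterated homotopy pullback `X₁ ×ʰ_{X₀} ⋯ ×ʰ_{X₀} X₁`: the space of chains
of `n` edges together with paths connecting the target vertex of each edge to the source
vertex of the following one. -/
def SpineSpace (X : SemiSimplicialSpace.{u}) (n : ℕ) : Type u :=
  { z : (Fin n → X.obj (op ⟨1⟩)) × (Fin (n - 1) → C(unitInterval, X.obj (op ⟨0⟩))) //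
      ∀ i : Fin (n - 1),
        (z.2 i) 0 = X.map (vertexHom 1 1).op (z.1 ⟨i, by omega⟩) ∧
        (z.2 i) 1 = X.map (vertexHom 1 0).op (z.1 ⟨(i : ℕ) + 1, by omega⟩) }

instance (n : ℕ) : TopologicalSpace (SpineSpace X n) :=
  instTopologicalSpaceSubtype

lemma vertex_edge_comp₀ (n k : ℕ) (h : k + 1 ≤ n) :
    vertexHom 1 0 ≫ edgeHom n k h = vertexHom n ⟨k, by omega⟩ := by
  apply SemiSimplexCat.hom_ext
  funext i
  apply Fin.ext
  show k + ((0 : Fin 2) : ℕ) = k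
  simp

lemma vertex_edge_comp₁ (n k : ℕ) (h : k + 1 ≤ n) :
    vertexHom 1 1 ≫ edgeHom n k h = vertexHom n ⟨k + 1, by omega⟩ := by
  apply SemiSimplexCat.hom_ext
  funext i
  apply Fin.ext
  show k + ((1 : Fin 2) : ℕ) = k + 1
  simp

/-- The Segal map, sending an `n`-simplex to its spine (with constant connecting paths). -/
def segalMap (X : SemiSimplicialSpace.{u}) (n : ℕ) :
    X.obj (op ⟨n⟩) → SpineSpace X n := fun x =>
  ⟨(fun i => X.map (edgeHom n i (by omega)).op x,
    fun i => ContinuousMap.const _ (X.map (vertexHom n ⟨(i : ℕ) + 1, by omega⟩).op x)),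
   fun i => by
    constructor
    · show X.map (vertexHom n _).op x = X.map (vertexHom 1 1).op (X.map (edgeHom n i (by omega)).op x)
      rw [map_map, vertex_edge_comp₁]
    · show X.map (vertexHom n _).op x = X.map (vertexHom 1 0).op
        (X.map (edgeHom n ((i : ℕ) + 1) (by omega)).op x)
      rw [map_map, vertex_edge_comp₀]⟩

/-- A semi-Segal space: a semi-simplicial space for which all Segal maps are weak
homotopy equivalences. -/
def IsSemiSegal (X : SemiSimplicialSpace.{u}) : Prop :=
  ∀ n : ℕ, 1 ≤ n → IsWeakHomotopyEquiv (segalMap X n)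

/-! #### Cartesian 1-simplices -/

/-- `Cₙ/s0`: the homotopy fiber, over the `k`-simplex `s0`, of the map `Cₙ → C_k` taking the
last `k`-dimensional face. -/
def simplexOver (X : SemiSimplicialSpace.{u}) {k n : ℕ} (h : k ≤ n) (s0 : X.obj (op ⟨k⟩)) :
    Type u :=
  StdHomotopyFiber (fun x : X.obj (op ⟨n⟩) => X.map (lastFaceHom k n h).op x) s0

instance {k n : ℕ} (h : k ≤ n) (s0 : X.obj (op ⟨k⟩)) : TopologicalSpace (simplexOver X h s0) :=
  instTopologicalSpaceSubtype

/-- The map `C₂/f → C₁/d` induced by the face `d₁`. -/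
def overD1Map (X : SemiSimplicialSpace.{u}) (f : X.obj (op ⟨1⟩)) (d : X.obj (op ⟨0⟩))
    (hd : X.map (vertexHom 1 1).op f = d) :
    simplexOver X (show 1 ≤ 2 by omega) f → simplexOver X (show 0 ≤ 1 by omega) d :=
  fun z =>
    ⟨(X.map middleFaceHom.op z.1.1,
      (ContinuousMap.comp (X.map (vertexHom 1 1).op).hom z.1.2 : C(unitInterval, _))),
     by
      have h0 := z.2.1
      have h1 := z.2.2
      constructor
      · show X.map (vertexHom 1 1).op (z.1.2 0) = _
        dsimp only
        rw [h0]
        dsimp only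
        rw [map_map, map_map]
        have e : vertexHom 1 1 ≫ lastFaceHom 1 2 (by omega)
            = lastFaceHom 0 1 (by omega) ≫ middleFaceHom := by
          apply SemiSimplexCat.hom_ext
          funext i
          fin_cases i
          rfl
        rw [e]
      · show X.map (vertexHom 1 1).op (z.1.2 1) = d
        rw [h1, hd]⟩

/-- The map `Cₙ/s0 → Dₙ/P(s0)` induced by a map of semi-simplicial spaces. -/
def overPMap (P : X ⟶ Y) {k n : ℕ} (h : k ≤ n) (s0 : X.obj (op ⟨k⟩)) :
    simplexOver X h s0 → simplexOver Y h (P.app (op ⟨k⟩) s0) :=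
  fun z =>
    ⟨(P.app (op ⟨n⟩) z.1.1,
      (ContinuousMap.comp (P.app (op ⟨k⟩)).hom z.1.2 : C(unitInterval, _))),
     by
      constructor
      · show P.app _ (z.1.2 0) = Y.map (lastFaceHom k n h).op (P.app _ z.1.1)
        rw [z.2.1, naturality_apply]
      · show P.app _ (z.1.2 1) = P.app _ s0
        rw [z.2.2]⟩

/-- A 1-simplex `f` of `X` is `P`-cartesian if the square
`C₂/f → C₁/d₀(f)`, `D₂/P(f) → D₁/d₀(P f)` (vertical maps induced by `P`, horizontal maps by
the face `d₁`) is a homotopy pullback. -/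
def IsSegalCartesian (P : X ⟶ Y) (f : X.obj (op ⟨1⟩)) : Prop :=
  IsHomotopyPullback
    (overPMap P (show 0 ≤ 1 by omega) (X.map (vertexHom 1 1).op f))
    (overD1Map Y (P.app (op ⟨1⟩) f) (P.app (op ⟨0⟩) (X.map (vertexHom 1 1).op f))
      (naturality_apply P (vertexHom 1 1) f).symm)
    (overD1Map X f (X.map (vertexHom 1 1).op f) rfl)
    (overPMap P (show 1 ≤ 2 by omega) f)

/-- The comparison map `X₁^{P-cart} → Y₁ ×ʰ_{Y₀} X₀`, sending a cartesian edge `f` to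
`(P f, d₀ f)` (with a constant connecting path). -/
def segalCartesianCompare (P : X ⟶ Y) :
    { f : X.obj (op ⟨1⟩) // IsSegalCartesian P f } →
      StdHomotopyPullback
        (fun y : Y.obj (op ⟨1⟩) => Y.map (vertexHom 1 1).op y)
        (fun c : X.obj (op ⟨0⟩) => P.app (op ⟨0⟩) c) :=
  fun f =>
    ⟨(P.app (op ⟨1⟩) f.1, X.map (vertexHom 1 1).op f.1,
      ContinuousMap.const _ (Y.map (vertexHom 1 1).op (P.app (op ⟨1⟩) f.1))),
     rfl, by
      show Y.map (vertexHom 1 1).op (P.app (op ⟨1⟩) f.1) = _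
      rw [← naturality_apply]⟩

/-- `P` is a cartesian fibration of semi-Segal spaces if the comparison map
`(P, d₀) : X₁^{P-cart} → Y₁ ×ʰ_{Y₀} X₀` is surjective on `π₀`. -/
def IsSegalCartesianFibration (P : X ⟶ Y) : Prop :=
  SurjOnPi0 (segalCartesianCompare P)

/-- The opposite of a semi-simplicial space. -/
def opp (X : SemiSimplicialSpace.{u}) : SemiSimplicialSpace.{u} :=
  revFunctor.op ⋙ X

/-- The map induced on opposite semi-simplicial spaces. -/
def oppMap (P : X ⟶ Y) : opp X ⟶ opp Y :=
  CategoryTheory.Functor.whiskerLeft revFunctor.op P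

/-- `f` is `P`-cocartesian if it is cartesian for the induced map of opposite
semi-simplicial spaces. -/
def IsSegalCocartesian (P : X ⟶ Y) (f : X.obj (op ⟨1⟩)) : Prop :=
  IsSegalCartesian (oppMap P) (f : (opp X).obj (op ⟨1⟩))

/-- `P` is a cocartesian fibration of semi-Segal spaces if `Pᵒᵖ` is a cartesian
fibration. -/
def IsSegalCocartesianFibration (P : X ⟶ Y) : Prop :=
  IsSegalCartesianFibration (oppMap P)

/-- A 1-simplex is an equivalence if it is both cartesian and cocartesian for the unique
map to the terminal semi-simplicial space. -/
def IsSegalEquivalence (X : SemiSimplicialSpace.{u}) (f : X.obj (op ⟨1⟩)) : Prop :=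
  IsSegalCartesian (toTerminal X) f ∧ IsSegalCocartesian (toTerminal X) f

/-- A semi-Segal space is weakly unital if the target map
`d₀ : X₁^{≃} → X₀` is surjective on `π₀`. -/
def IsWeaklyUnital (X : SemiSimplicialSpace.{u}) : Prop :=
  SurjOnPi0 (fun f : { f : X.obj (op ⟨1⟩) // IsSegalEquivalence X f } =>
    X.map (vertexHom 1 1).op f.1)

/-- A map of weakly unital semi-Segal spaces is weakly unital if it preserves
equivalences. -/
def IsWeaklyUnitalMap (P : X ⟶ Y) : Prop :=
  ∀ f : X.obj (op ⟨1⟩), IsSegalEquivalence X f → IsSegalEquivalence Y (P.app (op ⟨1⟩) f)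

/-! #### Level-wise (homotopy) pullbacks -/

/-- The level-wise strict pullback of a cospan `D' --F--> D <--P-- C` of semi-simplicial
spaces. -/
def ssPullback {C D D' : SemiSimplicialSpace.{u}} (F : D' ⟶ D) (P : C ⟶ D) :
    SemiSimplicialSpace.{u} where
  obj m := TopCat.of { z : D'.obj m × C.obj m // F.app m z.1 = P.app m z.2 }
  map {m₁ m₂} φ :=
    TopCat.ofHom ⟨fun z => ⟨(D'.map φ z.1.1, C.map φ z.1.2), by
        have h1 := natApp F φ z.1.1
        have h2 := natApp P φ z.1.2
        dsimp only
        rw [h1, h2, z.2]⟩,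
     by
      apply Continuous.subtype_mk
      exact ((D'.map φ).hom.continuous.comp (continuous_fst.comp continuous_subtype_val)).prodMk
        ((C.map φ).hom.continuous.comp (continuous_snd.comp continuous_subtype_val))⟩
  map_id m := by
    apply TopCat.ext
    intro z
    apply Subtype.ext
    dsimp
    rw [Prod.ext_iff]
    constructor
    · exact ConcreteCategory.congr_hom (D'.map_id m) z.1.1
    · exact ConcreteCategory.congr_hom (C.map_id m) z.1.2
  map_comp {m₁ m₂ m₃} φ ψ := by
    apply TopCat.ext
    intro z
    apply Subtype.ext
    dsimp
    rw [Prod.ext_iff]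
    constructor
    · exact ConcreteCategory.congr_hom (D'.map_comp φ ψ) z.1.1
    · exact ConcreteCategory.congr_hom (C.map_comp φ ψ) z.1.2

/-- First projection of the level-wise pullback. -/
def ssPullbackFst {C D D' : SemiSimplicialSpace.{u}} (F : D' ⟶ D) (P : C ⟶ D) :
    ssPullback F P ⟶ D' where
  app m := TopCat.ofHom ⟨fun z => z.1.1, (continuous_fst.comp continuous_subtype_val)⟩
  naturality m₁ m₂ φ := by
    apply TopCat.ext
    intro z
    rfl

/-- Second projection of the level-wise pullback. -/
def ssPullbackSnd {C D D' : SemiSimplicialSpace.{u}} (F : D' ⟶ D) (P : C ⟶ D) :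
    ssPullback F P ⟶ C where
  app m := TopCat.ofHom ⟨fun z => z.1.2, (continuous_snd.comp continuous_subtype_val)⟩
  naturality m₁ m₂ φ := by
    apply TopCat.ext
    intro z
    rfl

/-! #### Geometric realization -/

/-- The standard topological `n`-simplex. -/
def TopSimplex (n : ℕ) : Type :=
  { f : Fin (n + 1) → NNReal // ∑ i, f i = 1 }

instance (n : ℕ) : TopologicalSpace (TopSimplex n) :=
  instTopologicalSpaceSubtype

/-- The affine map of topological simplices induced by a morphism of the semi-simplex
category. -/
def TopSimplex.push {m n : SemiSimplexCat} (α : m ⟶ n) (t : TopSimplex m.len) :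
    TopSimplex n.len :=
  ⟨fun j => ∑ i ∈ Finset.univ.filter (fun i => α.toFun i = j), t.1 i, by
    rw [Finset.sum_fiberwise Finset.univ α.toFun t.1]
    exact t.2⟩

lemma TopSimplex.continuous_push {m n : SemiSimplexCat} (α : m ⟶ n) :
    Continuous (TopSimplex.push α) := by
  apply Continuous.subtype_mk
  apply continuous_pi
  intro j
  exact continuous_finset_sum _ fun i _ => (continuous_apply i).comp continuous_subtype_val

/-- The relation generating the geometric realization of a semi-simplicial space. -/
def realizationRel (X : SemiSimplicialSpace.{u}) :
    (Σ n : ℕ, X.obj (op ⟨n⟩) × TopSimplex n) → (Σ n : ℕ, X.obj (op ⟨n⟩) × TopSimplex n) →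
      Prop :=
  fun a b => ∃ (m n : ℕ) (α : (⟨m⟩ : SemiSimplexCat) ⟶ ⟨n⟩) (x : X.obj (op ⟨n⟩))
    (t : TopSimplex m),
      a = ⟨m, (X.map α.op x, t)⟩ ∧ b = ⟨n, (x, TopSimplex.push α t)⟩

/-- The geometric realization of a semi-simplicial space. -/
def Realization (X : SemiSimplicialSpace.{u}) : Type u :=
  Quot (realizationRel X)

instance (X : SemiSimplicialSpace.{u}) : TopologicalSpace (Realization X) := by
  unfold Realization
  infer_instance

/-- The map of geometric realizations induced by a map of semi-simplicial spaces. -/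
def Realization.map {X Y : SemiSimplicialSpace.{u}} (P : X ⟶ Y) :
    Realization X → Realization Y :=
  Quot.lift (fun a => Quot.mk _ ⟨a.1, (P.app (op ⟨a.1⟩) a.2.1, a.2.2)⟩)
    (by
      rintro a b ⟨m, n, α, x, t, rfl, rfl⟩
      exact Quot.sound ⟨m, n, α, P.app (op ⟨n⟩) x, t, by
        dsimp
        rw [naturality_apply], rfl⟩)

lemma Realization.continuous_map {X Y : SemiSimplicialSpace.{u}} (P : X ⟶ Y) :
    Continuous (Realization.map P) := by
  apply continuous_quot_lift
  apply continuous_sigma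
  intro n
  exact continuous_quot_mk.comp (continuous_sigmaMk.comp
    (((P.app (op ⟨n⟩)).hom.continuous.comp continuous_fst).prodMk continuous_snd))

/-- The inclusion of a point of `X₀` into the realization. -/
def Realization.pt {X : SemiSimplicialSpace.{u}} (x : X.obj (op ⟨0⟩)) : Realization X :=
  Quot.mk _ ⟨0, (x, ⟨fun _ => 1, by simp⟩)⟩

end SemiSimplicialSpace

end SemiSimp

/-! ### Reedy fibrations of semi-simplicial spaces -/

noncomputable section ReedyBlock

open CategoryTheory SemiSimplexCat Opposite SemiSimplicialSpace

namespace SemiSimplicialSpace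

variable {X Y : SemiSimplicialSpace.{u}}

/-- The index type of proper faces of the `n`-simplex. -/
def FaceIndex (n : ℕ) : Type :=
  { p : Σ m : ℕ, ((⟨m⟩ : SemiSimplexCat) ⟶ ⟨n⟩) // p.1 < n }

/-- The matching object `X_{∂[n]}`: compatible families of proper faces. -/
def MatchingObj (X : SemiSimplicialSpace.{u}) (n : ℕ) : Type u :=
  { uu : ∀ p : FaceIndex n, X.obj (op ⟨p.1.1⟩) //
      ∀ (p : FaceIndex n) (k : ℕ) (β : (⟨k⟩ : SemiSimplexCat) ⟶ ⟨p.1.1⟩) (hk : k < n),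
        X.map β.op (uu p) = uu ⟨⟨k, β ≫ p.1.2⟩, hk⟩ }

instance (n : ℕ) : TopologicalSpace (MatchingObj X n) :=
  instTopologicalSpaceSubtype

/-- The map of matching objects induced by a map of semi-simplicial spaces. -/
def matchingMap (P : X ⟶ Y) (n : ℕ) : MatchingObj X n → MatchingObj Y n := fun uu =>
  ⟨fun p => P.app (op ⟨p.1.1⟩) (uu.1 p), fun p k β hk => by
    rw [← naturality_apply P β (uu.1 p), uu.2 p k β hk]⟩

/-- The canonical family of proper faces of an `n`-simplex. -/
def canonicalMatching (X : SemiSimplicialSpace.{u}) (n : ℕ) (x : X.obj (op ⟨n⟩)) :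
    MatchingObj X n :=
  ⟨fun p => X.map p.1.2.op x, fun p k β hk => by rw [map_map]⟩

/-- The target `Yₙ ×_{Y_{∂[n]}} X_{∂[n]}` of the `n`-th Reedy comparison map. -/
def ReedyTarget (P : X ⟶ Y) (n : ℕ) : Type u :=
  { z : Y.obj (op ⟨n⟩) × MatchingObj X n //
      matchingMap P n z.2 = canonicalMatching Y n z.1 }

instance (P : X ⟶ Y) (n : ℕ) : TopologicalSpace (ReedyTarget P n) :=
  instTopologicalSpaceSubtype

/-- The `n`-th Reedy comparison map `Xₙ → Yₙ ×_{Y_{∂[n]}} X_{∂[n]}`. -/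
def reedyCompare (P : X ⟶ Y) (n : ℕ) : X.obj (op ⟨n⟩) → ReedyTarget P n := fun x =>
  ⟨(P.app (op ⟨n⟩) x, canonicalMatching X n x), by
    apply Subtype.ext
    funext p
    exact naturality_apply P p.1.2 x⟩

/-- A map of semi-simplicial spaces is a Reedy fibration if all its Reedy comparison maps
are Serre fibrations. -/
def IsReedyFibration (P : X ⟶ Y) : Prop :=
  ∀ n : ℕ, IsSerreFibration (reedyCompare P n)

/-- A semi-simplicial space is Reedy fibrant if its map to the terminal object is a Reedy
fibration. -/
def IsReedyFibrant (X : SemiSimplicialSpace.{u}) : Prop :=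
  IsReedyFibration (toTerminal X)

/-- The level-wise homotopy pullback of a cospan of semi-simplicial spaces. -/
def ssHomotopyPullback {C D D' : SemiSimplicialSpace.{u}} (F : D' ⟶ D) (P : C ⟶ D) :
    SemiSimplicialSpace.{u} where
  obj m := TopCat.of (StdHomotopyPullback
    (fun d' : D'.obj m => F.app m d') (fun c : C.obj m => P.app m c))
  map {m₁ m₂} φ :=
    TopCat.ofHom ⟨fun z => ⟨(D'.map φ z.1.1, C.map φ z.1.2.1, (D.map φ).hom.comp z.1.2.2), by
        constructor
        · show D.map φ (z.1.2.2 0) = F.app m₂ (D'.map φ z.1.1)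
          rw [z.2.1, natApp F φ]
        · show D.map φ (z.1.2.2 1) = P.app m₂ (C.map φ z.1.2.1)
          rw [z.2.2, natApp P φ]⟩,
     by
      apply Continuous.subtype_mk
      refine ((D'.map φ).hom.continuous.comp
        (continuous_fst.comp continuous_subtype_val)).prodMk (Continuous.prodMk ?_ ?_)
      · exact (C.map φ).hom.continuous.comp
          ((continuous_fst.comp continuous_snd).comp continuous_subtype_val)
      · exact (ContinuousMap.continuous_postcomp (D.map φ).hom).comp
          ((continuous_snd.comp continuous_snd).comp continuous_subtype_val)⟩
  map_id m := by
    apply TopCat.ext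
    intro z
    apply Subtype.ext
    refine Prod.ext (ConcreteCategory.congr_hom (D'.map_id m) z.1.1) (Prod.ext ?_ ?_)
    · exact ConcreteCategory.congr_hom (C.map_id m) z.1.2.1
    · show (D.map (𝟙 m)).hom.comp z.1.2.2 = z.1.2.2
      apply ContinuousMap.ext
      intro t
      exact ConcreteCategory.congr_hom (D.map_id m) (z.1.2.2 t)
  map_comp {m₁ m₂ m₃} φ ψ := by
    apply TopCat.ext
    intro z
    apply Subtype.ext
    refine Prod.ext (ConcreteCategory.congr_hom (D'.map_comp φ ψ) z.1.1) (Prod.ext ?_ ?_)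
    · exact ConcreteCategory.congr_hom (C.map_comp φ ψ) z.1.2.1
    · show (D.map (φ ≫ ψ)).hom.comp z.1.2.2 = (D.map ψ).hom.comp ((D.map φ).hom.comp z.1.2.2)
      apply ContinuousMap.ext
      intro t
      exact ConcreteCategory.congr_hom (D.map_comp φ ψ) (z.1.2.2 t)

/-- The projection of the level-wise homotopy pullback onto the first factor. -/
def ssHomotopyPullbackFst {C D D' : SemiSimplicialSpace.{u}} (F : D' ⟶ D) (P : C ⟶ D) :
    ssHomotopyPullback F P ⟶ D' where
  app m := TopCat.ofHom ⟨fun z => z.1.1, continuous_fst.comp continuous_subtype_val⟩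
  naturality m₁ m₂ φ := by
    apply TopCat.ext
    intro z
    rfl

end SemiSimplicialSpace

end ReedyBlock


/-! ### Auxiliary development for the Reedy factorization -/

noncomputable section ReedyReplAux

open CategoryTheory SemiSimplexCat Opposite SemiSimplicialSpace

namespace ReedyRepl

/-! #### Combinatorics of strictly monotone maps -/

lemma succAbove_val {n : ℕ} (p : Fin (n+1)) (i : Fin n) :
    (p.succAbove i : ℕ) = if (i:ℕ) < (p:ℕ) then (i:ℕ) else (i:ℕ)+1 := by
  rw [Fin.succAbove]
  split_ifs with h1 h2 h2
  · rfl
  · exact absurd (by simpa [Fin.lt_def] using h1) h2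
  · exact absurd (by simp [Fin.lt_def, h2]) h1
  · rfl

lemma strictMono_card_le {m n : ℕ} (f : Fin (m+1) → Fin (n+1)) (hf : StrictMono f) :
    m ≤ n := by
  have := Fintype.card_le_of_injective f hf.injective
  simpa using this

lemma strictMono_endo_eq_id {k : ℕ} (f : Fin k → Fin k) (hf : StrictMono f) : f = id := by
  have hbij : Function.Bijective f :=
    (Fintype.bijective_iff_injective_and_card f).mpr ⟨hf.injective, rfl⟩
  have wf : WellFoundedLT (Fin k) := Finite.to_wellFoundedLT
  have := (hf.range_inj (strictMono_id (α := Fin k))).mp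
  apply this
  rw [Set.range_id, Set.range_eq_univ]
  exact hbij.2

lemma exists_not_mem_range {m n : ℕ} (f : Fin (m+1) → Fin (n+1)) (hf : StrictMono f)
    (hmn : m < n) : ∃ j, j ∉ Set.range f := by
  by_contra hc
  push_neg at hc
  have hsurj : Function.Surjective f := fun j => hc j
  have := Fintype.card_le_of_surjective f hsurj
  simp at this
  omega

lemma exists_factor {m n : ℕ} (f : Fin (m+1) → Fin (n+2)) (hf : StrictMono f)
    (j : Fin (n+2)) (hj : j ∉ Set.range f) :
    ∃ g : Fin (m+1) → Fin (n+1), StrictMono g ∧ f = j.succAbove ∘ g := by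
  have hne : ∀ i, f i ≠ j := fun i h => hj ⟨i, h⟩
  choose g hg using fun i => Fin.exists_succAbove_eq (hne i)
  refine ⟨g, ?_, ?_⟩
  · intro a b hab
    have : j.succAbove (g a) < j.succAbove (g b) := by rw [hg a, hg b]; exact hf hab
    exact (Fin.succAbove_lt_succAbove_iff).mp this
  · funext i
    exact (hg i).symm

lemma succAbove_comm {n : ℕ} (i : Fin (n+2)) (j : Fin (n+3)) (hij : (i:ℕ) < (j:ℕ)) :
    (Fin.succAbove j) ∘ (Fin.succAbove (⟨(i:ℕ), by omega⟩ : Fin (n+2))) =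
    (Fin.succAbove (⟨(i:ℕ), by omega⟩ : Fin (n+3))) ∘
      (Fin.succAbove (⟨(j:ℕ)-1, by omega⟩ : Fin (n+2))) := by
  funext t
  apply Fin.ext
  rw [Function.comp_apply, Function.comp_apply, succAbove_val, succAbove_val,
    succAbove_val, succAbove_val]
  have hj := j.isLt
  simp only []
  split_ifs <;> omega

/-- The `j`-th coface, as a morphism of the semi-simplex category. -/
def dl (n : ℕ) (j : Fin (n+2)) : (⟨n⟩ : SemiSimplexCat) ⟶ ⟨n+1⟩ :=
  ⟨Fin.succAbove j, Fin.strictMono_succAbove j⟩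

/-- A strictly monotone map as a morphism of the semi-simplex category. -/
def homOf {m n : ℕ} (f : Fin (m+1) → Fin (n+1)) (hf : StrictMono f) :
    (⟨m⟩ : SemiSimplexCat) ⟶ ⟨n⟩ := ⟨f, hf⟩

lemma dl_comp {n : ℕ} (i : Fin (n+2)) (j : Fin (n+3)) (hij : (i:ℕ) < (j:ℕ)) :
    dl n i ≫ dl (n+1) j =
      dl n ⟨(j:ℕ)-1, by omega⟩ ≫ dl (n+1) ⟨(i:ℕ), by omega⟩ := by
  apply SemiSimplexCat.hom_ext
  exact succAbove_comm i j hij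

variable (X Y : SemiSimplicialSpace.{0}) (P : X ⟶ Y)

/-! #### The tower of path-space replacements -/

/-- The underlying (unconstrained) spaces of the replacement tower. -/
def ZR : ℕ → TopCat.{0}
  | 0 => TopCat.of ((X.obj (op ⟨0⟩)) × C(I, Y.obj (op ⟨0⟩)))
  | (n+1) => TopCat.of ((X.obj (op ⟨n+1⟩)) ×
      C(I, (Y.obj (op ⟨n+1⟩)) × (Fin (n+2) → ZR n)))

/-- The underlying simplex of a point of the tower. -/
def xZ : ∀ n, ZR X Y n → X.obj (op ⟨n⟩)
  | 0, z => z.1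
  | (_+1), z => z.1

/-- The projection to the base. -/
def qZ : ∀ n, ZR X Y n → Y.obj (op ⟨n⟩)
  | 0, z => z.2 1
  | (_+1), z => (z.2 1).1

/-- The `j`-th face of a point of the tower. -/
def dZ (n : ℕ) (j : Fin (n+2)) (z : ZR X Y (n+1)) : ZR X Y n := (z.2 1).2 j

lemma continuous_xZ : ∀ n, Continuous (xZ X Y n)
  | 0 => continuous_fst
  | (_+1) => continuous_fst

lemma continuous_qZ : ∀ n, Continuous (qZ X Y n)
  | 0 => (continuous_eval_const 1).comp continuous_snd
  | (_+1) => continuous_fst.comp ((continuous_eval_const 1).comp continuous_snd)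

lemma continuous_dZ (n : ℕ) (j : Fin (n+2)) : Continuous (dZ X Y n j) :=
  (continuous_apply j).comp (continuous_snd.comp
    ((continuous_eval_const 1).comp continuous_snd))

/-- The canonical lift of a simplex of `X` into the tower. -/
def cX : ∀ n, X.obj (op ⟨n⟩) → ZR X Y n
  | 0, x => (x, ContinuousMap.const I (P.app (op ⟨0⟩) x))
  | (n+1), x => (x, ContinuousMap.const I
      (P.app (op ⟨n+1⟩) x, fun j => cX n (X.map (dl n j).op x)))

lemma continuous_cX : ∀ n, Continuous (cX X Y P n)
  | 0 => continuous_id.prodMk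
      (ContinuousMap.continuous_const'.comp (P.app (op ⟨0⟩)).hom.continuous)
  | (n+1) => continuous_id.prodMk <| ContinuousMap.continuous_const'.comp <|
      ((P.app (op ⟨n+1⟩)).hom.continuous).prodMk <| continuous_pi fun j =>
        (continuous_cX n).comp (X.map (dl n j).op).hom.continuous

lemma xZ_cX : ∀ n x, xZ X Y n (cX X Y P n x) = x
  | 0, _ => rfl
  | (_+1), _ => rfl

lemma qZ_cX : ∀ n x, qZ X Y n (cX X Y P n x) = P.app (op ⟨n⟩) x
  | 0, _ => rfl
  | (_+1), _ => rfl

lemma dZ_cX (n : ℕ) (j : Fin (n+2)) (x : X.obj (op ⟨n+1⟩)) :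
    dZ X Y n j (cX X Y P (n+1) x) = cX X Y P n (X.map (dl n j).op x) := rfl

/-- Pairwise compatibility of a family of prospective codimension-one faces. -/
def dCompat : ∀ n, (Fin (n+2) → ZR X Y n) → Prop
  | 0, _ => True
  | (t+1), u => ∀ (i j : Fin (t+3)), (hij : (i:ℕ) < (j:ℕ)) →
      dZ X Y t ⟨(i:ℕ), by omega⟩ (u j) = dZ X Y t ⟨(j:ℕ)-1, by omega⟩ (u i)

/-- The predicate carving out the replacement semi-simplicial space inside the tower. -/
def Good : ∀ n, ZR X Y n → Prop
  | 0, z => z.2 0 = P.app (op ⟨0⟩) z.1 ∧ ∀ _ : I, True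
  | (n+1), z => (z.2 0 = (P.app (op ⟨n+1⟩) z.1,
        fun j => cX X Y P n (X.map (dl n j).op z.1))) ∧
      ∀ s : I, (∀ j, Good n ((z.2 s).2 j)) ∧
        (∀ j, qZ X Y n ((z.2 s).2 j) = Y.map (dl n j).op (z.2 s).1) ∧
        dCompat X Y n (z.2 s).2

lemma good_dZ {n : ℕ} {z : ZR X Y (n+1)} (hz : Good X Y P (n+1) z) (j : Fin (n+2)) :
    Good X Y P n (dZ X Y n j z) := ((hz.2 1).1) j

lemma qZ_dZ {n : ℕ} {z : ZR X Y (n+1)} (hz : Good X Y P (n+1) z) (j : Fin (n+2)) :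
    qZ X Y n (dZ X Y n j z) = Y.map (dl n j).op (qZ X Y (n+1) z) := ((hz.2 1).2.1) j

lemma dZ_dZ {t : ℕ} {z : ZR X Y (t+2)} (hz : Good X Y P (t+2) z)
    (i j : Fin (t+3)) (hij : (i:ℕ) < (j:ℕ)) :
    dZ X Y t ⟨(i:ℕ), by omega⟩ (dZ X Y (t+1) j z) =
      dZ X Y t ⟨(j:ℕ)-1, by omega⟩ (dZ X Y (t+1) i z) := ((hz.2 1).2.2) i j hij

lemma good_cX : ∀ n x, Good X Y P n (cX X Y P n x)
  | 0, x => ⟨rfl, fun _ => trivial⟩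
  | (n+1), x => by
    refine ⟨rfl, fun s => ⟨fun j => good_cX n _, fun j => qZ_cX X Y P n _ |>.trans ?_, ?_⟩⟩
    · exact naturality_apply P (dl n j) x
    · cases n with
      | zero => trivial
      | succ t =>
        intro i j hij
        show dZ X Y t _ (cX X Y P (t+1) (X.map (dl (t+1) j).op x)) = dZ X Y t _ (cX X Y P (t+1) (X.map (dl (t+1) i).op x))
        rw [dZ_cX, dZ_cX, map_map, map_map, dl_comp ⟨(i:ℕ), by omega⟩ j (by simpa using hij)]


/-! #### The replacement spaces and their face maps -/

lemma succAbove_comm' {n : ℕ} (a : Fin (n+3)) (b' : Fin (n+2)) (a' : Fin (n+2))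
    (b : Fin (n+3)) (ha : (a':ℕ) = (a:ℕ)) (hb : (b':ℕ)+1 = (b:ℕ))
    (hab : (a:ℕ) < (b:ℕ)) :
    a.succAbove ∘ b'.succAbove = b.succAbove ∘ a'.succAbove := by
  funext t
  apply Fin.ext
  rw [Function.comp_apply, Function.comp_apply, succAbove_val, succAbove_val,
    succAbove_val, succAbove_val]
  split_ifs <;> omega

/-- The subspace of good points: the spaces of the replacement. -/
def Zg (n : ℕ) : Type := {z : ZR X Y n // Good X Y P n z}

instance (n : ℕ) : TopologicalSpace (Zg X Y P n) := instTopologicalSpaceSubtype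

/-- The codimension-one face maps of the replacement. -/
def dZg (n : ℕ) (j : Fin (n+2)) : C(Zg X Y P (n+1), Zg X Y P n) :=
  ⟨fun z => ⟨dZ X Y n j z.1, good_dZ X Y P z.2 j⟩,
    Continuous.subtype_mk ((continuous_dZ X Y n j).comp continuous_subtype_val) _⟩

/-- Transport along an equality of levels. -/
def zgCast {n m : ℕ} (h : n = m) : C(Zg X Y P n, Zg X Y P m) := by
  subst h; exact ContinuousMap.id _

variable {X Y P} in
/-- A canonical choice of a vertex not in the image. -/
noncomputable def pickJ {m t : ℕ} (f : Fin (m+1) → Fin (t+2)) (hf : StrictMono f)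
    (hmn : m < t+1) : Fin (t+2) := (exists_not_mem_range f hf hmn).choose

variable {X Y P} in
lemma pickJ_spec {m t : ℕ} (f : Fin (m+1) → Fin (t+2)) (hf : StrictMono f)
    (hmn : m < t+1) : pickJ f hf hmn ∉ Set.range f :=
  (exists_not_mem_range f hf hmn).choose_spec

variable {X Y P} in
/-- The canonical factorization through the corresponding coface. -/
noncomputable def pickG {m t : ℕ} (f : Fin (m+1) → Fin (t+2)) (hf : StrictMono f)
    (hmn : m < t+1) : Fin (m+1) → Fin (t+1) :=
  (exists_factor f hf (pickJ f hf hmn) (pickJ_spec f hf hmn)).choose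

variable {X Y P} in
lemma pickG_spec {m t : ℕ} (f : Fin (m+1) → Fin (t+2)) (hf : StrictMono f)
    (hmn : m < t+1) : StrictMono (pickG f hf hmn) ∧
      f = (pickJ f hf hmn).succAbove ∘ (pickG f hf hmn) :=
  (exists_factor f hf (pickJ f hf hmn) (pickJ_spec f hf hmn)).choose_spec

/-- The general face maps of the replacement. -/
noncomputable def mapZ : ∀ (n m : ℕ) (f : Fin (m+1) → Fin (n+1)),
    StrictMono f → C(Zg X Y P n, Zg X Y P m)
  | 0, _, f, hf => zgCast X Y P (Nat.le_zero.mp (strictMono_card_le f hf)).symm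
  | (t+1), m, f, hf =>
    if h : m = t+1 then zgCast X Y P h.symm
    else
      (mapZ t m (pickG f hf (Nat.lt_of_le_of_ne (strictMono_card_le f hf) h))
          (pickG_spec f hf (Nat.lt_of_le_of_ne (strictMono_card_le f hf) h)).1).comp
        (dZg X Y P t (pickJ f hf (Nat.lt_of_le_of_ne (strictMono_card_le f hf) h)))

lemma mapZ_congr {n m : ℕ} (f f' : Fin (m+1) → Fin (n+1)) (hf : StrictMono f)
    (hf' : StrictMono f') (h : f = f') : mapZ X Y P n m f hf = mapZ X Y P n m f' hf' := by
  subst h; rfl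

lemma mapZ_self (n : ℕ) (f : Fin (n+1) → Fin (n+1)) (hf : StrictMono f) :
    mapZ X Y P n n f hf = ContinuousMap.id _ := by
  cases n with
  | zero => rfl
  | succ t => rw [mapZ, dif_pos rfl]; rfl

lemma mapZ_fact : ∀ (t m : ℕ) (f : Fin (m+1) → Fin (t+2)) (hf : StrictMono f)
    (j : Fin (t+2)) (g : Fin (m+1) → Fin (t+1)) (hg : StrictMono g),
    f = j.succAbove ∘ g →
    mapZ X Y P (t+1) m f hf = (mapZ X Y P t m g hg).comp (dZg X Y P t j) := by
  intro t
  induction t with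
  | zero =>
    intro m f hf j g hg hfac
    have hm : m = 0 := Nat.le_zero.mp (strictMono_card_le g hg)
    subst hm
    have hne : ¬ ((0:ℕ) = 0+1) := by omega
    conv_lhs => rw [mapZ]
    rw [dif_neg hne]
    set hlt := Nat.lt_of_le_of_ne (strictMono_card_le f hf) hne with hltdef
    have hj : j ∉ Set.range f := by
      rintro ⟨i, hi⟩
      rw [hfac] at hi
      exact Fin.succAbove_ne j (g i) hi
    have hj0 := pickJ_spec f hf hlt
    have hjj : pickJ f hf hlt = j := by
      have h1 : pickJ f hf hlt ≠ f 0 := fun h => hj0 ⟨0, h.symm⟩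
      have h2 : j ≠ f 0 := fun h => hj ⟨0, h.symm⟩
      have h4 : (j : ℕ) ≠ (f 0 : ℕ) := fun h => h2 (Fin.ext h)
      have h5 : ((pickJ f hf hlt : Fin 2) : ℕ) ≠ (f 0 : ℕ) := fun h => h1 (Fin.ext h)
      apply Fin.ext
      have hb1 := (pickJ f hf hlt).isLt
      have hb2 := j.isLt
      have hb3 := (f 0).isLt
      omega
    rw [mapZ_self, mapZ_self, hjj]
  | succ t IH =>
    intro m f hf j g hg hfac
    have hm : m ≤ t+1 := strictMono_card_le g hg
    have hne : ¬ (m = t+1+1) := by omega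
    conv_lhs => rw [mapZ]
    rw [dif_neg hne]
    set hlt := Nat.lt_of_le_of_ne (strictMono_card_le f hf) hne with hltdef
    have hj0 := pickJ_spec f hf hlt
    obtain ⟨hg0, hfac0⟩ := pickG_spec f hf hlt
    set j0 := pickJ f hf hlt with hj0def
    set g0 := pickG f hf hlt with hg0def
    have hj : j ∉ Set.range f := by
      rintro ⟨i, hi⟩
      rw [hfac] at hi
      exact Fin.succAbove_ne j (g i) hi
    -- key symmetric step
    have key : ∀ (ja jb : Fin (t+3)) (ga gb : Fin (m+1) → Fin (t+2))
        (hga : StrictMono ga) (hgb : StrictMono gb),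
        f = ja.succAbove ∘ ga → f = jb.succAbove ∘ gb → (ja : ℕ) < (jb : ℕ) →
        (mapZ X Y P (t+1) m ga hga).comp (dZg X Y P (t+1) ja) =
          (mapZ X Y P (t+1) m gb hgb).comp (dZg X Y P (t+1) jb) := by
      intro ja jb ga gb hga hgb hfa hfb hab
      have hjbval : (jb : ℕ) < t + 3 := jb.isLt
      set jb' : Fin (t+2) := ⟨(jb : ℕ) - 1, by omega⟩ with hjb'
      set ja' : Fin (t+2) := ⟨(ja : ℕ), by omega⟩ with hja'
      have hnr : jb' ∉ Set.range ga := by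
        rintro ⟨i, hi⟩
        have : f i = jb := by
          rw [hfa, Function.comp_apply, hi]
          apply Fin.ext
          rw [succAbove_val]
          simp only [hjb']
          have : (ja:ℕ) ≤ (jb:ℕ) - 1 := by omega
          rw [if_neg (by omega)]
          omega
        have : jb ∈ Set.range f := ⟨i, this⟩
        rw [hfb] at this
        obtain ⟨i', hi'⟩ := this
        exact Fin.succAbove_ne jb (gb i') hi'
      obtain ⟨h, hh, hfach⟩ := exists_factor ga hga jb' hnr
      have hcomm : ja.succAbove ∘ jb'.succAbove = jb.succAbove ∘ ja'.succAbove :=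
        succAbove_comm' ja jb' ja' jb rfl (by simp only [hjb']; omega) hab
      have hgbh : gb = ja'.succAbove ∘ h := by
        have h1 : jb.succAbove ∘ gb = jb.succAbove ∘ (ja'.succAbove ∘ h) := by
          rw [← hfb, hfa, hfach]
          show (ja.succAbove ∘ jb'.succAbove) ∘ h = (jb.succAbove ∘ ja'.succAbove) ∘ h
          rw [hcomm]
        funext i
        exact Fin.succAbove_right_injective (congrFun h1 i)
      rw [IH m ga hga jb' h hh hfach, IH m gb hgb ja' h hh hgbh]
      apply ContinuousMap.ext
      intro z
      show (mapZ X Y P t m h hh) ((dZg X Y P t jb') ((dZg X Y P (t+1) ja) z)) =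
        (mapZ X Y P t m h hh) ((dZg X Y P t ja') ((dZg X Y P (t+1) jb) z))
      congr 1
      apply Subtype.ext
      show dZ X Y t jb' (dZ X Y (t+1) ja z.1) = dZ X Y t ja' (dZ X Y (t+1) jb z.1)
      exact (dZ_dZ X Y P z.2 ja jb hab).symm
    rcases eq_or_ne j0 j with hjj | hjj
    · subst hjj
      have : g0 = g := by
        funext i
        apply Fin.succAbove_right_injective (p := j0)
        exact (congrFun hfac0 i).symm.trans (congrFun hfac i)
      rw [mapZ_congr X Y P g0 g _ hg this]
    · rcases Nat.lt_or_ge (j0 : ℕ) (j : ℕ) with hlt | hge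
      · exact key j0 j g0 g hg0 hg hfac0 hfac hlt
      · have hltv : (j : ℕ) < (j0 : ℕ) := by
          rcases Nat.lt_or_ge (j : ℕ) (j0 : ℕ) with h | h
          · exact h
          · exact absurd (Fin.ext (le_antisymm h hge)) hjj
        exact (key j j0 g g0 hg hg0 hfac hfac0 hltv).symm

lemma mapZ_d (t : ℕ) (j : Fin (t+2)) :
    mapZ X Y P (t+1) t (Fin.succAbove j) (Fin.strictMono_succAbove j) = dZg X Y P t j := by
  rw [mapZ_fact X Y P t t (Fin.succAbove j) _ j id strictMono_id (by funext i; rfl),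
    mapZ_self]
  apply ContinuousMap.ext
  intro z
  rfl

lemma mapZ_comp : ∀ (n k m : ℕ) (g : Fin (k+1) → Fin (n+1)) (hg : StrictMono g)
    (f : Fin (m+1) → Fin (k+1)) (hf : StrictMono f) (hgf : StrictMono (g ∘ f)),
    mapZ X Y P n m (g ∘ f) hgf = (mapZ X Y P k m f hf).comp (mapZ X Y P n k g hg) := by
  intro n
  induction n with
  | zero =>
    intro k m g hg f hf hgf
    have hk : k = 0 := Nat.le_zero.mp (strictMono_card_le g hg)
    subst hk
    have hgid : g = id := strictMono_endo_eq_id g hg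
    rw [mapZ_self X Y P 0 g hg, ContinuousMap.comp_id]
    exact mapZ_congr X Y P _ _ _ hf (by rw [hgid]; funext i; rfl)
  | succ t IH =>
    intro k m g hg f hf hgf
    by_cases hk : k = t+1
    · subst hk
      have hgid : g = id := strictMono_endo_eq_id g hg
      rw [mapZ_self X Y P (t+1) g hg, ContinuousMap.comp_id]
      exact mapZ_congr X Y P _ _ _ hf (by rw [hgid]; funext i; rfl)
    · have hkt : k < t+1 := Nat.lt_of_le_of_ne (strictMono_card_le g hg) hk
      obtain ⟨j, hj⟩ := exists_not_mem_range g hg hkt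
      obtain ⟨g', hg', hfacg⟩ := exists_factor g hg j hj
      have hfacgf : g ∘ f = j.succAbove ∘ (g' ∘ f) := by rw [hfacg]; rfl
      rw [mapZ_fact X Y P t m (g ∘ f) hgf j (g' ∘ f) (hg'.comp hf) hfacgf,
        mapZ_fact X Y P t k g hg j g' hg' hfacg,
        IH k m g' hg' f hf (hg'.comp hf)]
      rfl

/-! #### The replacement as a semi-simplicial space -/

/-- The replacement semi-simplicial space. -/
noncomputable def Zfun : SemiSimplicialSpace.{0} where
  obj a := TopCat.of (Zg X Y P a.unop.len)
  map {a b} φ := TopCat.ofHom (mapZ X Y P a.unop.len b.unop.len φ.unop.toFun φ.unop.strictMono)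
  map_id a := by
    show TopCat.ofHom (mapZ X Y P a.unop.len a.unop.len _ _) = _
    rw [mapZ_self]
    rfl
  map_comp {a b c} φ ψ := by
    have := mapZ_comp X Y P a.unop.len b.unop.len c.unop.len
      φ.unop.toFun φ.unop.strictMono ψ.unop.toFun ψ.unop.strictMono
      (φ.unop.strictMono.comp ψ.unop.strictMono)
    exact congrArg TopCat.ofHom this

lemma good_cXg (n : ℕ) (x : X.obj (op ⟨n⟩)) : Good X Y P n (cX X Y P n x) :=
  good_cX X Y P n x

/-- The canonical inclusion, level-wise. -/
noncomputable def iApp (n : ℕ) : C(X.obj (op ⟨n⟩), Zg X Y P n) :=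
  ⟨fun x => ⟨cX X Y P n x, good_cX X Y P n x⟩,
    Continuous.subtype_mk (continuous_cX X Y P n) _⟩

lemma mapZ_cX : ∀ (n m : ℕ) (f : Fin (m+1) → Fin (n+1)) (hf : StrictMono f)
    (x : X.obj (op ⟨n⟩)),
    mapZ X Y P n m f hf (iApp X Y P n x) = iApp X Y P m (X.map (homOf f hf).op x) := by
  intro n
  induction n with
  | zero =>
    intro m f hf x
    have hm : m = 0 := Nat.le_zero.mp (strictMono_card_le f hf)
    subst hm
    rw [mapZ_self]
    have hfid : f = id := strictMono_endo_eq_id f hf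
    have : homOf f hf = 𝟙 (⟨0⟩ : SemiSimplexCat) := by
      apply SemiSimplexCat.hom_ext; exact hfid
    rw [this]
    have : X.map (𝟙 (⟨0⟩ : SemiSimplexCat)).op x = x := by
      have h := X.map_id (op (⟨0⟩ : SemiSimplexCat))
      exact ConcreteCategory.congr_hom h x
    rw [this]
    rfl
  | succ t IH =>
    intro m f hf x
    by_cases hmt : m = t+1
    · subst hmt
      rw [mapZ_self]
      have hfid : f = id := strictMono_endo_eq_id f hf
      have : homOf f hf = 𝟙 (⟨t+1⟩ : SemiSimplexCat) := by
        apply SemiSimplexCat.hom_ext; exact hfid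
      rw [this]
      have : X.map (𝟙 (⟨t+1⟩ : SemiSimplexCat)).op x = x := by
        have h := X.map_id (op (⟨t+1⟩ : SemiSimplexCat))
        exact ConcreteCategory.congr_hom h x
      rw [this]
      rfl
    · have hlt : m < t+1 := Nat.lt_of_le_of_ne (strictMono_card_le f hf) hmt
      obtain ⟨j, hj⟩ := exists_not_mem_range f hf hlt
      obtain ⟨g, hg, hfac⟩ := exists_factor f hf j hj
      rw [mapZ_fact X Y P t m f hf j g hg hfac]
      have hd : (dZg X Y P t j) (iApp X Y P (t+1) x) =
          iApp X Y P t (X.map (dl t j).op x) := by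
        apply Subtype.ext
        exact dZ_cX X Y P t j x
      have he : homOf g hg ≫ dl t j = homOf f hf :=
        SemiSimplexCat.hom_ext _ _ hfac.symm
      show (mapZ X Y P t m g hg) ((dZg X Y P t j) (iApp X Y P (t+1) x)) = _
      rw [hd, IH m g hg, map_map, he]
  
lemma qZ_mapZ : ∀ (n m : ℕ) (f : Fin (m+1) → Fin (n+1)) (hf : StrictMono f)
    (z : Zg X Y P n),
    qZ X Y m (mapZ X Y P n m f hf z).1 = Y.map (homOf f hf).op (qZ X Y n z.1) := by
  intro n
  induction n with
  | zero =>
    intro m f hf z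
    have hm : m = 0 := Nat.le_zero.mp (strictMono_card_le f hf)
    subst hm
    rw [mapZ_self]
    have : homOf f hf = 𝟙 (⟨0⟩ : SemiSimplexCat) := by
      apply SemiSimplexCat.hom_ext; exact strictMono_endo_eq_id f hf
    rw [this]
    exact (ConcreteCategory.congr_hom (Y.map_id (op (⟨0⟩ : SemiSimplexCat))) _).symm
  | succ t IH =>
    intro m f hf z
    by_cases hmt : m = t+1
    · subst hmt
      rw [mapZ_self]
      have : homOf f hf = 𝟙 (⟨t+1⟩ : SemiSimplexCat) := by
        apply SemiSimplexCat.hom_ext; exact strictMono_endo_eq_id f hf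
      rw [this]
      exact (ConcreteCategory.congr_hom (Y.map_id (op (⟨t+1⟩ : SemiSimplexCat))) _).symm
    · have hlt : m < t+1 := Nat.lt_of_le_of_ne (strictMono_card_le f hf) hmt
      obtain ⟨j, hj⟩ := exists_not_mem_range f hf hlt
      obtain ⟨g, hg, hfac⟩ := exists_factor f hf j hj
      rw [mapZ_fact X Y P t m f hf j g hg hfac]
      show qZ X Y m ((mapZ X Y P t m g hg) ((dZg X Y P t j) z)).1 = _
      rw [IH m g hg]
      have hq : qZ X Y t ((dZg X Y P t j) z).1 =
          Y.map (dl t j).op (qZ X Y (t+1) z.1) := qZ_dZ X Y P z.2 j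
      have he : homOf g hg ≫ dl t j = homOf f hf :=
        SemiSimplexCat.hom_ext _ _ hfac.symm
      rw [hq, map_map, he]

/-- The canonical inclusion into the replacement. -/
noncomputable def iZ : X ⟶ Zfun X Y P where
  app a := by
    have h : a = op (⟨a.unop.len⟩ : SemiSimplexCat) := rfl
    exact TopCat.ofHom (iApp X Y P a.unop.len)
  naturality a b φ := by
    apply TopCat.ext
    intro x
    exact (mapZ_cX X Y P a.unop.len b.unop.len φ.unop.toFun φ.unop.strictMono x).symm

/-- The projection from the replacement to the base. -/
noncomputable def qmor : Zfun X Y P ⟶ Y where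
  app a := TopCat.ofHom ⟨fun z => qZ X Y a.unop.len z.1,
    (continuous_qZ X Y a.unop.len).comp continuous_subtype_val⟩
  naturality a b φ := by
    apply TopCat.ext
    intro z
    exact qZ_mapZ X Y P a.unop.len b.unop.len φ.unop.toFun φ.unop.strictMono z

lemma iZ_qmor : iZ X Y P ≫ qmor X Y P = P := by
  ext a x
  show qZ X Y a.unop.len (cX X Y P a.unop.len x) = P.app a x
  rw [qZ_cX]

/-! #### Strong deformation retracts are weak homotopy equivalences -/

end ReedyRepl

section SDR

variable {A Z : Type} [TopologicalSpace A] [TopologicalSpace Z]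

theorem isWeakHomotopyEquiv_of_sdr (i : C(A, Z)) (r : C(Z, A)) (hri : ∀ a, r (i a) = a)
    (H : C(Z × I, Z)) (h0 : ∀ z, H (z, 0) = z) (h1 : ∀ z, H (z, 1) = i (r z))
    (hfix : ∀ (a : A) (t : I), H (i a, t) = i a) :
    IsWeakHomotopyEquiv (⇑i) := by
  refine ⟨i.continuous, ⟨?_, ?_⟩, fun n x => ⟨?_, ?_⟩⟩
  · -- injective on π₀
    intro u v h
    induction u using Quotient.inductionOn with | h a => ?_
    induction v using Quotient.inductionOn with | h b => ?_
    have h' : (Quotient.mk _ (i a) : ZerothHomotopy Z) = Quotient.mk _ (i b) := h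
    have hj : Joined (i a) (i b) := Quotient.exact h'
    obtain ⟨γ⟩ := hj
    have : Joined (r (i a)) (r (i b)) := ⟨γ.map r.continuous⟩
    rw [hri, hri] at this
    exact Quotient.sound this
  · -- surjective on π₀
    intro u
    induction u using Quotient.inductionOn with | h z => ?_
    refine ⟨Quotient.mk _ (r z), ?_⟩
    have hpath : Joined (i (r z)) z := by
      refine ⟨(Path.mk ⟨fun t => H (z, t), ?_⟩ (h0 z) (h1 z)).symm⟩
      exact H.continuous.comp (continuous_const.prodMk continuous_id)
    exact Quotient.sound hpath
  · -- injective on πₙ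
    intro u v h
    induction u using Quotient.inductionOn with | h a => ?_
    induction v using Quotient.inductionOn with | h b => ?_
    have h' : (Quotient.mk _ (GenLoop.push ⟨⇑i, i.continuous⟩ a) :
        HomotopyGroup (Fin n) Z (i x)) = Quotient.mk _ (GenLoop.push ⟨⇑i, i.continuous⟩ b) := h
    have hh : GenLoop.Homotopic (GenLoop.push ⟨⇑i, i.continuous⟩ a)
        (GenLoop.push ⟨⇑i, i.continuous⟩ b) := Quotient.exact h'
    obtain ⟨K⟩ := hh
    refine Quotient.sound ⟨⟨⟨⟨fun p => r (K p), r.continuous.comp K.continuous⟩, ?_, ?_⟩, ?_⟩⟩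
    · intro y
      show r (K (0, y)) = a.1 y
      rw [K.apply_zero]
      exact hri (a.1 y)
    · intro y
      show r (K (1, y)) = b.1 y
      rw [K.apply_one]
      exact hri (b.1 y)
    · intro t y hy
      show r (K (t, y)) = a.1 y
      rw [K.eq_fst t hy]
      exact hri (a.1 y)
  · -- surjective on πₙ
    intro u
    induction u using Quotient.inductionOn with | h g => ?_
    have hbd : ∀ y ∈ Cube.boundary (Fin n), r (g.1 y) = x := by
      intro y hy
      rw [g.2 y hy]
      exact hri x
    refine ⟨Quotient.mk _ ⟨r.comp g.1, hbd⟩, ?_⟩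
    refine Quotient.sound ?_
    refine GenLoop.Homotopic.symm ⟨⟨⟨⟨fun p => H (g.1 p.2, p.1), ?_⟩, ?_, ?_⟩, ?_⟩⟩
    · exact H.continuous.comp ((g.1.continuous.comp continuous_snd).prodMk continuous_fst)
    · intro y
      exact h0 (g.1 y)
    · intro y
      exact h1 (g.1 y)
    · intro t y hy
      show H (g.1 y, t) = g.1 y
      rw [g.2 y hy]
      exact hfix x t

/-- Squeezing of the unit interval used for the retracting homotopy. -/
def squeeze : C(I × I, I) :=
  ⟨fun p => ⟨(p.1 : ℝ) * (1 - (p.2 : ℝ)), by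
      constructor
      · exact mul_nonneg p.1.2.1 (by have := p.2.2.2; linarith)
      · have h1 : (p.1 : ℝ) ≤ 1 := p.1.2.2
        have h2 : (1 : ℝ) - p.2 ≤ 1 := by have := p.2.2.1; linarith
        have h3 : (0:ℝ) ≤ 1 - p.2 := by have := p.2.2.2; linarith
        calc (p.1 : ℝ) * (1 - (p.2:ℝ)) ≤ 1 * 1 := mul_le_mul h1 h2 h3 zero_le_one
        _ = 1 := one_mul 1⟩,
    by
      apply Continuous.subtype_mk
      exact (continuous_subtype_val.comp continuous_fst).mul
        (continuous_const.sub (continuous_subtype_val.comp continuous_snd))⟩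

/-- The inclusion of a space into a (conditioned) path-space construction over it is a
weak homotopy equivalence. -/
theorem pathtype_whe {B : Type} [TopologicalSpace B] (c : C(A, B)) (Q : B → Prop)
    (hQ : ∀ a, Q (c a)) :
    IsWeakHomotopyEquiv
      (fun a => (⟨(a, ContinuousMap.const I (c a)), rfl, fun _ => hQ a⟩ :
        {z : A × C(I, B) // z.2 0 = c z.1 ∧ ∀ s : I, Q (z.2 s)})) := by
  set Z := {z : A × C(I, B) // z.2 0 = c z.1 ∧ ∀ s : I, Q (z.2 s)} with hZ
  have hc : Continuous (fun a => (⟨(a, ContinuousMap.const I (c a)), rfl, fun _ => hQ a⟩ : Z)) := by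
    apply Continuous.subtype_mk
    exact continuous_id.prodMk (ContinuousMap.continuous_const'.comp c.continuous)
  set iC : C(A, Z) := ⟨_, hc⟩ with hiC
  set rC : C(Z, A) := ⟨fun z => z.1.1, continuous_fst.comp continuous_subtype_val⟩ with hrC
  -- the retracting homotopy
  have hFc : Continuous (fun q : (Z × I) × I => q.1.1.1.2 (squeeze (q.2, q.1.2))) := by
    have h1 : Continuous (fun q : (Z × I) × I => (q.1.1.1.2 : C(I, B))) :=
      continuous_snd.comp ((continuous_subtype_val.comp continuous_fst).comp continuous_fst)
    have h2 : Continuous (fun q : (Z × I) × I => squeeze (q.2, q.1.2)) :=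
      squeeze.continuous.comp (continuous_snd.prodMk (continuous_snd.comp continuous_fst))
    exact continuous_eval.comp (h1.prodMk h2)
  set F : C((Z × I) × I, B) := ⟨_, hFc⟩ with hF
  set Hc : C(Z × I, C(I, B)) := F.curry with hHc
  have hmem : ∀ p : Z × I, (Hc p) 0 = c p.1.1.1 ∧ ∀ s : I, Q ((Hc p) s) := by
    intro p
    constructor
    · show p.1.1.2 (squeeze (0, p.2)) = c p.1.1.1
      have h0' : squeeze (0, p.2) = 0 := Subtype.ext (by simp [squeeze])
      rw [h0']
      exact p.1.2.1
    · intro s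
      exact p.1.2.2 _
  set H : C(Z × I, Z) := ⟨fun p => ⟨(p.1.1.1, Hc p), (hmem p).1, (hmem p).2⟩, by
    apply Continuous.subtype_mk
    exact (continuous_fst.comp (continuous_subtype_val.comp continuous_fst)).prodMk
      Hc.continuous⟩ with hH
  refine isWeakHomotopyEquiv_of_sdr iC rC (fun a => rfl) H ?_ ?_ ?_
  · intro z
    apply Subtype.ext
    refine Prod.ext rfl ?_
    apply ContinuousMap.ext
    intro s
    show z.1.2 (squeeze (s, 0)) = z.1.2 s
    congr 1
    apply Subtype.ext
    show (s : ℝ) * (1 - ((0:I) : ℝ)) = s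
    norm_num
  · intro z
    apply Subtype.ext
    refine Prod.ext rfl ?_
    apply ContinuousMap.ext
    intro s
    show z.1.2 (squeeze (s, 1)) = c z.1.1
    have h1' : squeeze (s, 1) = 0 := Subtype.ext (by simp [squeeze])
    rw [h1']
    exact z.2.1
  · intro a t
    apply Subtype.ext
    refine Prod.ext rfl ?_
    apply ContinuousMap.ext
    intro s
    rfl

end SDR

namespace ReedyRepl

variable (X Y : SemiSimplicialSpace.{0}) (P : X ⟶ Y)

lemma levelEquiv_iZ : IsLevelEquiv (iZ X Y P) := by
  intro n
  cases n with
  | zero =>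
    have := pathtype_whe (A := X.obj (op (⟨0⟩ : SemiSimplexCat)))
      (P.app (op (⟨0⟩ : SemiSimplexCat))).hom (fun _ => True) (fun _ => trivial)
    exact this
  | succ t =>
    have hc : Continuous (fun x : X.obj (op (⟨t+1⟩ : SemiSimplexCat)) =>
        ((P.app (op (⟨t+1⟩ : SemiSimplexCat)) x,
          fun j => cX X Y P t (X.map (dl t j).op x)) :
          (Y.obj (op (⟨t+1⟩ : SemiSimplexCat))) × (Fin (t+2) → ZR X Y t))) :=
      ((P.app (op ⟨t+1⟩)).hom.continuous).prodMk <| continuous_pi fun j =>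
        (continuous_cX X Y P t).comp (X.map (dl t j).op).hom.continuous
    have := pathtype_whe (A := X.obj (op (⟨t+1⟩ : SemiSimplexCat))) ⟨_, hc⟩
      (fun w => (∀ j, Good X Y P t (w.2 j)) ∧
        (∀ j, qZ X Y t (w.2 j) = Y.map (dl t j).op w.1) ∧ dCompat X Y t w.2)
      (fun a => (good_cX X Y P (t+1) a).2 0)
    exact this

end ReedyRepl

namespace ReedyRepl

variable (X Y : SemiSimplicialSpace.{0}) (P : X ⟶ Y)

/-- The face index of the `j`-th codimension-one face. -/
def faceIdx (t : ℕ) (j : Fin (t+2)) : FaceIndex (t+1) := ⟨⟨t, dl t j⟩, Nat.lt_succ_self t⟩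

/-- Extraction of the codimension-one faces from a point of the Reedy target. -/
def Phi (t : ℕ) (w : ReedyTarget (qmor X Y P) (t+1)) :
    (Y.obj (op (⟨t+1⟩ : SemiSimplexCat))) × (Fin (t+2) → ZR X Y t) :=
  (w.1.1, fun j => (w.1.2.1 (faceIdx t j)).1)

lemma continuous_Phi (t : ℕ) : Continuous (Phi X Y P t) := by
  apply Continuous.prodMk
  · exact continuous_fst.comp continuous_subtype_val
  · exact continuous_pi fun j => continuous_subtype_val.comp
      ((continuous_apply (faceIdx t j)).comp (continuous_subtype_val.comp
        (continuous_snd.comp continuous_subtype_val)))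

lemma zfun_map_dl (s : ℕ) (j : Fin (s+2)) (z : Zg X Y P (s+1)) :
    (Zfun X Y P).map (dl s j).op z = dZg X Y P s j z := by
  have h := mapZ_d X Y P s j
  exact congrFun (congrArg (fun (F : C(Zg X Y P (s+1), Zg X Y P s)) => ⇑F) h) z

lemma Phi_cond (t : ℕ) (w : ReedyTarget (qmor X Y P) (t+1)) :
    (∀ j, Good X Y P t ((Phi X Y P t w).2 j)) ∧
    (∀ j, qZ X Y t ((Phi X Y P t w).2 j) = Y.map (dl t j).op (Phi X Y P t w).1) ∧
    dCompat X Y t (Phi X Y P t w).2 := by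
  refine ⟨fun j => (w.1.2.1 (faceIdx t j)).2, fun j => ?_, ?_⟩
  · exact congrFun (congrArg Subtype.val w.2) (faceIdx t j)
  · cases t with
    | zero => trivial
    | succ s =>
      intro i j hij
      have hprop := w.1.2.2
      have h1 : (Zfun X Y P).map (dl s ⟨(i:ℕ), by omega⟩).op (w.1.2.1 (faceIdx (s+1) j)) =
          w.1.2.1 ⟨⟨s, dl s ⟨(i:ℕ), by omega⟩ ≫ dl (s+1) j⟩, by show s < s+2; omega⟩ :=
        hprop (faceIdx (s+1) j) s (dl s ⟨(i:ℕ), by omega⟩) (by omega)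
      have h2 : (Zfun X Y P).map (dl s ⟨(j:ℕ)-1, by omega⟩).op (w.1.2.1 (faceIdx (s+1) i)) =
          w.1.2.1 ⟨⟨s, dl s ⟨(j:ℕ)-1, by omega⟩ ≫ dl (s+1) i⟩, by show s < s+2; omega⟩ :=
        hprop (faceIdx (s+1) i) s (dl s ⟨(j:ℕ)-1, by omega⟩) (by omega)
      replace h1 := (zfun_map_dl X Y P _ _ _).symm.trans h1
      replace h2 := (zfun_map_dl X Y P _ _ _).symm.trans h2
      have hLHS : dZ X Y s ⟨(i:ℕ), by omega⟩ ((Phi X Y P (s+1) w).2 j) =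
          (w.1.2.1 ⟨⟨s, dl s ⟨(i:ℕ), by omega⟩ ≫ dl (s+1) j⟩, by show s < s+2; omega⟩).1 :=
        congrArg Subtype.val h1
      have hRHS : dZ X Y s ⟨(j:ℕ)-1, by omega⟩ ((Phi X Y P (s+1) w).2 i) =
          (w.1.2.1 ⟨⟨s, dl s ⟨(j:ℕ)-1, by omega⟩ ≫ dl (s+1) i⟩, by show s < s+2; omega⟩).1 :=
        congrArg Subtype.val h2
      rw [hLHS, hRHS]
      have hcomp : dl s ⟨(i:ℕ), by omega⟩ ≫ dl (s+1) j =
          dl s ⟨(j:ℕ)-1, by omega⟩ ≫ dl (s+1) ⟨(i:ℕ), by omega⟩ := dl_comp _ j hij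
      have hi' : (⟨(i:ℕ), by omega⟩ : Fin (s+3)) = i := Fin.ext rfl
      rw [hi'] at hcomp
      rw [hcomp]

lemma continuous_reedyCompare (n : ℕ) :
    Continuous (reedyCompare (qmor X Y P) n) := by
  apply Continuous.subtype_mk
  apply Continuous.prodMk
  · exact (continuous_qZ X Y n).comp continuous_subtype_val
  · apply Continuous.subtype_mk
    exact continuous_pi fun p => (mapZ X Y P n p.1.1 p.1.2.toFun p.1.2.strictMono).continuous

lemma coeI0 : (((0:I)):ℝ) = 0 := rfl

lemma coeI1 : (((1:I)):ℝ) = 1 := rfl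

/-- Congruence for matching families in equal face indices. -/
lemma matching_apply_congr {W : SemiSimplicialSpace.{0}} {n k : ℕ} (u : MatchingObj W n)
    {β β' : (⟨k⟩ : SemiSimplexCat) ⟶ ⟨n⟩} (hβ : β = β') (hk hk' : k < n) :
    u.1 ⟨⟨k, β⟩, hk⟩ = u.1 ⟨⟨k, β'⟩, hk'⟩ := by subst hβ; rfl

/-- The clamping map onto the unit interval. -/
noncomputable def pj : ℝ → I := Set.projIcc (0:ℝ) 1 zero_le_one

lemma continuous_pj : Continuous pj := continuous_projIcc

lemma pj_mem {x : ℝ} (h0 : 0 ≤ x) (h1 : x ≤ 1) (z : I) (hz : (z : ℝ) = x) : pj x = z := by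
  apply Subtype.ext
  rw [pj, Set.projIcc_of_mem zero_le_one ⟨h0, h1⟩]
  exact hz.symm


lemma reedy_fib_succ (t : ℕ) : IsSerreFibration (reedyCompare (qmor X Y P) (t+1)) := by
  refine ⟨continuous_reedyCompare X Y P (t+1), ?_⟩
  intro m H h hyp
  have hend0 : ∀ a, (h a).1.2 1 = Phi X Y P t (H (a, 0)) := by
    intro a
    have hy := hyp a
    refine Prod.ext ?_ ?_
    · exact congrArg (fun w => w.1.1) hy
    · funext j
      have h1 := congrArg (fun w => (w.1.2.1 (faceIdx t j)).1) hy
      have h2 : ((reedyCompare (qmor X Y P) (t+1) (h a)).1.2.1 (faceIdx t j)).1 =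
          ((h a).1.2 1).2 j := by
        show ((Zfun X Y P).map (dl t j).op (h a)).1 = _
        refine (congrArg Subtype.val (zfun_map_dl X Y P t j (h a))).trans ?_
        rfl
      exact h2.symm.trans h1
  have harith : ∀ (τ s : I), (0:ℝ) ≤ (s:ℝ) * (1 + (τ:ℝ)) := fun τ s =>
    mul_nonneg s.2.1 (by have := τ.2.1; linarith)
  set e1 : ((Fin m → I) × I) × I →
      (Y.obj (op (⟨t+1⟩ : SemiSimplexCat))) × (Fin (t+2) → ZR X Y t) :=
    fun q => if (q.2:ℝ) * (1 + (q.1.2:ℝ)) ≤ 1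
      then (h q.1.1).1.2 (pj ((q.2:ℝ) * (1 + (q.1.2:ℝ))))
      else Phi X Y P t (H (q.1.1, pj ((q.2:ℝ) * (1 + (q.1.2:ℝ)) - 1))) with he1def
  have harithc : Continuous (fun q : ((Fin m → I) × I) × I => (q.2:ℝ) * (1 + (q.1.2:ℝ))) :=
    (continuous_subtype_val.comp continuous_snd).mul
      (continuous_const.add (continuous_subtype_val.comp
        (continuous_snd.comp continuous_fst)))
  have he1 : Continuous e1 := by
    rw [he1def]
    apply Continuous.if_le
    · exact continuous_eval.comp
        (Continuous.prodMk
          (continuous_snd.comp ((continuous_subtype_val (X := ZR X Y (t+1)) (p := Good X Y P (t+1))).comp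
            (h.continuous.comp (continuous_fst.comp continuous_fst))))
          (continuous_pj.comp harithc))
    · apply (continuous_Phi X Y P t).comp
      apply H.continuous.comp
      apply Continuous.prodMk
      · exact continuous_fst.comp continuous_fst
      · exact continuous_pj.comp (harithc.sub continuous_const)
    · exact harithc
    · exact continuous_const
    · intro q hq
      have hp1 : pj ((q.2:ℝ) * (1 + (q.1.2:ℝ))) = 1 :=
        pj_mem (harith q.1.2 q.2) (le_of_eq hq) 1 (by rw [coeI1]; exact hq.symm)
      have hp0 : pj ((q.2:ℝ) * (1 + (q.1.2:ℝ)) - 1) = 0 :=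
        pj_mem (by rw [hq]; norm_num) (by rw [hq]; norm_num) 0
          (by rw [coeI0, hq]; norm_num)
      rw [hp1, hp0]
      have : (q.1.1, (0:I)) = ((q.1.1, 0) : (Fin m → I) × I) := rfl
      rw [this]
      exact hend0 q.1.1
  set E : C(((Fin m → I) × I) × I,
      (Y.obj (op (⟨t+1⟩ : SemiSimplexCat))) × (Fin (t+2) → ZR X Y t)) := ⟨e1, he1⟩ with hEdef
  have hval : ∀ (p : (Fin m → I) × I) (s : I), (E.curry p) s = e1 (p, s) := fun _ _ => rfl
  have hgood : ∀ p : (Fin m → I) × I,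
      Good X Y P (t+1) ((h p.1).1.1, E.curry p) := by
    intro p
    constructor
    · show e1 (p, 0) = _
      simp only [he1def]
      have hc : ((0:I):ℝ) * (1 + (p.2:ℝ)) ≤ 1 := by
        rw [coeI0, zero_mul]; norm_num
      rw [if_pos hc]
      have hp0 : pj (((0:I):ℝ) * (1 + (p.2:ℝ))) = 0 :=
        pj_mem (harith p.2 0) hc 0 (by rw [coeI0]; ring)
      rw [hp0]
      exact (h p.1).2.1
    · intro s
      suffices hsuff : (∀ j, Good X Y P t ((e1 (p, s)).2 j)) ∧
          (∀ j, qZ X Y t ((e1 (p, s)).2 j) = Y.map (dl t j).op (e1 (p, s)).1) ∧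
          dCompat X Y t (e1 (p, s)).2 by exact hsuff
      by_cases hc : (s:ℝ) * (1 + (p.2:ℝ)) ≤ 1
      · have hv : e1 (p, s) = (h p.1).1.2 (pj ((s:ℝ) * (1 + (p.2:ℝ)))) := by
          simp only [he1def]; rw [if_pos hc]
        rw [hv]
        exact (h p.1).2.2 _
      · have hv : e1 (p, s) = Phi X Y P t (H (p.1, pj ((s:ℝ) * (1 + (p.2:ℝ)) - 1))) := by
          simp only [he1def]; rw [if_neg hc]
        rw [hv]
        exact Phi_cond X Y P t _
  refine ⟨⟨fun p => ⟨((h p.1).1.1, E.curry p), hgood p⟩, ?_⟩, ?_, ?_⟩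
  · apply Continuous.subtype_mk
    exact (continuous_fst.comp ((continuous_subtype_val (X := ZR X Y (t+1)) (p := Good X Y P (t+1))).comp
      (h.continuous.comp continuous_fst))).prodMk E.curry.continuous
  · intro a
    apply Subtype.ext
    refine Prod.ext rfl ?_
    apply ContinuousMap.ext
    intro s
    show e1 ((a, (0:I)), s) = (h a).1.2 s
    simp only [he1def]
    have hc : (s:ℝ) * (1 + ((0:I):ℝ)) ≤ 1 := by
      rw [coeI0]
      simpa using s.2.2
    rw [if_pos hc]
    congr 1
    exact pj_mem (harith 0 s) hc s (by rw [coeI0]; ring)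
  · rintro ⟨a, τ⟩
    have hend : (E.curry (a, τ)) 1 = Phi X Y P t (H (a, τ)) := by
      show e1 ((a, τ), 1) = _
      simp only [he1def]
      rcases eq_or_lt_of_le τ.2.1 with h0 | h0
      · have hτ : τ = 0 := Subtype.ext h0.symm
        rw [hτ]
        have hc : ((1:I):ℝ) * (1 + ((0:I):ℝ)) ≤ 1 := by
          rw [coeI0, coeI1]; norm_num
        rw [if_pos hc]
        have hp1 : pj (((1:I):ℝ) * (1 + ((0:I):ℝ))) = 1 :=
          pj_mem (harith 0 1) hc 1
            (by rw [coeI0, coeI1]; ring)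
        rw [hp1]
        exact hend0 a
      · have hc : ¬ (((1:I):ℝ) * (1 + (τ:ℝ)) ≤ 1) := by
          rw [coeI1, one_mul]; linarith
        rw [if_neg hc]
        have hpτ : pj (((1:I):ℝ) * (1 + (τ:ℝ)) - 1) = τ :=
          pj_mem (by rw [coeI1]; linarith [τ.2.1])
            (by rw [coeI1]; linarith [τ.2.2]) τ
            (by rw [coeI1]; ring)
        rw [hpτ]
    apply Subtype.ext
    refine Prod.ext ?_ ?_
    · show ((E.curry (a, τ)) 1).1 = (Phi X Y P t (H (a, τ))).1
      exact congrArg Prod.fst hend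
    · apply Subtype.ext
      funext p
      obtain ⟨⟨k, α⟩, hk⟩ := p
      have hk' : k < t+1 := hk
      obtain ⟨j, hj⟩ := exists_not_mem_range α.toFun α.strictMono hk'
      obtain ⟨g, hg, hfac⟩ := exists_factor α.toFun α.strictMono j hj
      have hmf := mapZ_fact X Y P t k α.toFun α.strictMono j g hg hfac
      have step1 : (Zfun X Y P).map α.op
          (⟨((h a).1.1, E.curry (a, τ)), hgood (a, τ)⟩ : Zg X Y P (t+1)) =
          mapZ X Y P t k g hg ((dZg X Y P t j)
            ⟨((h a).1.1, E.curry (a, τ)), hgood (a, τ)⟩) := by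
        show mapZ X Y P (t+1) k α.toFun α.strictMono _ = _
        rw [hmf]
        rfl
      have step2 : (dZg X Y P t j)
          (⟨((h a).1.1, E.curry (a, τ)), hgood (a, τ)⟩ : Zg X Y P (t+1)) =
          (H (a, τ)).1.2.1 (faceIdx t j) := by
        apply Subtype.ext
        show ((E.curry (a, τ)) 1).2 j = _
        rw [hend]
        rfl
      have step3 : mapZ X Y P t k g hg ((H (a, τ)).1.2.1 (faceIdx t j)) =
          (H (a, τ)).1.2.1 ⟨⟨k, homOf g hg ≫ dl t j⟩, hk⟩ :=
        (H (a, τ)).1.2.2 (faceIdx t j) k (homOf g hg) hk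
      show (Zfun X Y P).map α.op
          (⟨((h a).1.1, E.curry (a, τ)), hgood (a, τ)⟩ : Zg X Y P (t+1)) = _
      rw [step1, step2, step3]
      exact matching_apply_congr (H (a, τ)).1.2
        (SemiSimplexCat.hom_ext _ _ hfac.symm) hk hk

lemma reedy_fib_zero : IsSerreFibration (reedyCompare (qmor X Y P) 0) := by
  refine ⟨continuous_reedyCompare X Y P 0, ?_⟩
  intro m H h hyp
  have hend0 : ∀ a, (h a).1.2 1 = (H (a, 0)).1.1 := by
    intro a
    exact congrArg (fun w => w.1.1) (hyp a)
  have harith : ∀ (τ s : I), (0:ℝ) ≤ (s:ℝ) * (1 + (τ:ℝ)) := fun τ s =>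
    mul_nonneg s.2.1 (by have := τ.2.1; linarith)
  set e1 : ((Fin m → I) × I) × I → Y.obj (op (⟨0⟩ : SemiSimplexCat)) :=
    fun q => if (q.2:ℝ) * (1 + (q.1.2:ℝ)) ≤ 1
      then (h q.1.1).1.2 (pj ((q.2:ℝ) * (1 + (q.1.2:ℝ))))
      else (H (q.1.1, pj ((q.2:ℝ) * (1 + (q.1.2:ℝ)) - 1))).1.1 with he1def
  have harithc : Continuous (fun q : ((Fin m → I) × I) × I => (q.2:ℝ) * (1 + (q.1.2:ℝ))) :=
    (continuous_subtype_val.comp continuous_snd).mul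
      (continuous_const.add (continuous_subtype_val.comp
        (continuous_snd.comp continuous_fst)))
  have he1 : Continuous e1 := by
    rw [he1def]
    apply Continuous.if_le
    · exact continuous_eval.comp
        (Continuous.prodMk
          (continuous_snd.comp ((continuous_subtype_val (X := ZR X Y (0)) (p := Good X Y P (0))).comp
            (h.continuous.comp (continuous_fst.comp continuous_fst))))
          (continuous_pj.comp harithc))
    · exact (continuous_fst.comp continuous_subtype_val).comp
        (H.continuous.comp ((continuous_fst.comp continuous_fst).prodMk
          (continuous_pj.comp (harithc.sub continuous_const))))
    · exact harithc
    · exact continuous_const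
    · intro q hq
      have hp1 : pj ((q.2:ℝ) * (1 + (q.1.2:ℝ))) = 1 :=
        pj_mem (harith q.1.2 q.2) (le_of_eq hq) 1 (by rw [coeI1]; exact hq.symm)
      have hp0 : pj ((q.2:ℝ) * (1 + (q.1.2:ℝ)) - 1) = 0 :=
        pj_mem (by rw [hq]; norm_num) (by rw [hq]; norm_num) 0 (by rw [coeI0, hq]; norm_num)
      rw [hp1, hp0]
      exact hend0 q.1.1
  set E : C(((Fin m → I) × I) × I, Y.obj (op (⟨0⟩ : SemiSimplexCat))) := ⟨e1, he1⟩ with hEdef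
  have hgood : ∀ p : (Fin m → I) × I, Good X Y P 0 ((h p.1).1.1, E.curry p) := by
    intro p
    refine ⟨?_, fun _ => trivial⟩
    show e1 (p, 0) = _
    simp only [he1def]
    have hc : ((0:I):ℝ) * (1 + (p.2:ℝ)) ≤ 1 := by
      rw [coeI0, zero_mul]; norm_num
    rw [if_pos hc]
    have hp0 : pj (((0:I):ℝ) * (1 + (p.2:ℝ))) = 0 :=
      pj_mem (harith p.2 0) hc 0 (by rw [coeI0]; ring)
    rw [hp0]
    exact (h p.1).2.1
  refine ⟨⟨fun p => ⟨((h p.1).1.1, E.curry p), hgood p⟩, ?_⟩, ?_, ?_⟩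
  · apply Continuous.subtype_mk
    exact (continuous_fst.comp ((continuous_subtype_val (X := ZR X Y (0)) (p := Good X Y P (0))).comp
      (h.continuous.comp continuous_fst))).prodMk E.curry.continuous
  · intro a
    apply Subtype.ext
    refine Prod.ext rfl ?_
    apply ContinuousMap.ext
    intro s
    show e1 ((a, (0:I)), s) = (h a).1.2 s
    simp only [he1def]
    have hc : (s:ℝ) * (1 + ((0:I):ℝ)) ≤ 1 := by
      rw [coeI0]
      simpa using s.2.2
    rw [if_pos hc]
    congr 1
    exact pj_mem (harith 0 s) hc s (by rw [coeI0]; ring)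
  · rintro ⟨a, τ⟩
    have hend : (E.curry (a, τ)) 1 = (H (a, τ)).1.1 := by
      show e1 ((a, τ), 1) = _
      simp only [he1def]
      rcases eq_or_lt_of_le τ.2.1 with h0 | h0
      · have hτ : τ = 0 := Subtype.ext h0.symm
        rw [hτ]
        have hc : ((1:I):ℝ) * (1 + ((0:I):ℝ)) ≤ 1 := by
          rw [coeI0, coeI1]; norm_num
        rw [if_pos hc]
        have hp1 : pj (((1:I):ℝ) * (1 + ((0:I):ℝ))) = 1 :=
          pj_mem (harith 0 1) hc 1 (by rw [coeI0, coeI1]; ring)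
        rw [hp1]
        exact hend0 a
      · have hc : ¬ (((1:I):ℝ) * (1 + (τ:ℝ)) ≤ 1) := by
          rw [coeI1, one_mul]; linarith
        rw [if_neg hc]
        have hpτ : pj (((1:I):ℝ) * (1 + (τ:ℝ)) - 1) = τ :=
          pj_mem (by rw [coeI1]; linarith [τ.2.1]) (by rw [coeI1]; linarith [τ.2.2]) τ
            (by rw [coeI1]; ring)
        rw [hpτ]
    apply Subtype.ext
    refine Prod.ext ?_ ?_
    · show (E.curry (a, τ)) 1 = (H (a, τ)).1.1
      exact hend
    · apply Subtype.ext
      funext p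
      exact absurd p.2 (Nat.not_lt_zero _)

lemma isReedyFibration_qmor : IsReedyFibration (qmor X Y P) := by
  intro n
  cases n with
  | zero => exact reedy_fib_zero X Y P
  | succ t => exact reedy_fib_succ X Y P t

end ReedyRepl
end ReedyReplAux

open CategoryTheory SemiSimplexCat Opposite SemiSimplicialSpace in
/-- **Reedy fibrant replacement.**
Every map of semi-simplicial spaces factors as a level equivalence followed by a Reedy
fibration. -/
theorem reedy_factorization {X Y : SemiSimplicialSpace.{0}} (P : X ⟶ Y) :
    ∃ (Z : SemiSimplicialSpace.{0}) (i : X ⟶ Z) (q : Z ⟶ Y),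
      IsLevelEquiv i ∧ IsReedyFibration q ∧ i ≫ q = P := by
  exact ⟨ReedyRepl.Zfun X Y P, ReedyRepl.iZ X Y P, ReedyRepl.qmor X Y P,
    ReedyRepl.levelEquiv_iZ X Y P, ReedyRepl.isReedyFibration_qmor X Y P,
    ReedyRepl.iZ_qmor X Y P⟩
end

section
/- Let G• be a simplicial group acting simplicially on a simplicial set X•, such that the action of Gₙ on Xₙ is free for every n, and let (X/G)• be the level-wise quotient simplicial set. Then the projection X• → (X/G)• is a Kan fibration. -/
open scoped unitInterval Topology.Homotopy

/-! ### Simplicial group actions and Kan fibrations -/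

noncomputable section SimplicialGroupKan

open CategoryTheory Simplicial SSet Opposite

/-- A solution to the lifting problem given by a horn `u` in `X` over a filler `sy` in `Y`. -/
def HornLiftExists {X Y : SSet} (p : X ⟶ Y) (n : ℕ) (i : Fin (n + 1))
    (u : (Λ[n, i] : SSet) ⟶ X) (sy : Δ[n] ⟶ Y) : Prop :=
  ∃ l : Δ[n] ⟶ X, Λ[n, i].ι ≫ l = u ∧ l ≫ p = sy

/-- Kan fibrations: maps with the right lifting property against all horn inclusions
`Λ[n, i] ⊆ Δ[n]`, `n ≥ 1`, `0 ≤ i ≤ n`. -/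
def IsKanFibration {X Y : SSet} (p : X ⟶ Y) : Prop :=
  ∀ (n : ℕ) (i : Fin (n + 2)) (u : (Λ[n + 1, i] : SSet) ⟶ X) (sy : Δ[n + 1] ⟶ Y),
    u ≫ p = Λ[n + 1, i].ι ≫ sy → HornLiftExists p (n + 1) i u sy

/-- A simplicial group acting simplicially on a simplicial set `X`:
a group structure on each level of a simplicial set of "group elements" together with a
levelwise group action compatible with the simplicial structure maps. -/
structure SimplicialGroupAction (X : SSet.{0}) where
  /-- the simplicial group -/
  G : SimplexCategoryᵒᵖ ⥤ GrpCat.{0}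
  /-- the levelwise action -/
  act : ∀ m : SimplexCategoryᵒᵖ, (G.obj m) → X.obj m → X.obj m
  one_act : ∀ m (x : X.obj m), act m 1 x = x
  mul_act : ∀ m (g g' : G.obj m) (x : X.obj m), act m (g * g') x = act m g (act m g' x)
  map_act : ∀ {m₁ m₂ : SimplexCategoryᵒᵖ} (φ : m₁ ⟶ m₂) (g : G.obj m₁) (x : X.obj m₁),
    X.map φ (act m₁ g x) = act m₂ (G.map φ g) (X.map φ x)

namespace SimplicialGroupAction

variable {X : SSet.{0}} (A : SimplicialGroupAction X)

/-- The levelwise orbit equivalence relation. -/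
def orbitSetoid (m : SimplexCategoryᵒᵖ) : Setoid (X.obj m) where
  r x y := ∃ g : A.G.obj m, A.act m g x = y
  iseqv := by
    constructor
    · intro x; exact ⟨1, A.one_act m x⟩
    · rintro x y ⟨g, rfl⟩
      refine ⟨g⁻¹, ?_⟩
      rw [← A.mul_act, inv_mul_cancel, A.one_act]
    · rintro x y z ⟨g, rfl⟩ ⟨g', rfl⟩
      exact ⟨g' * g, A.mul_act m g' g x⟩

/-- The levelwise quotient simplicial set `X/G`. -/
def quotient : SSet.{0} where
  obj m := Quotient (A.orbitSetoid m)
  map {m₁ m₂} φ := TypeCat.ofHom (Quotient.map (X.map φ)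
    (by rintro x y ⟨g, rfl⟩; exact ⟨A.G.map φ g, (A.map_act φ g x).symm⟩))
  map_id m := by
    ext z
    induction z using Quotient.inductionOn with
    | h x =>
      have hx : X.map (𝟙 m) x = x := by simp
      show Quotient.mk (A.orbitSetoid m) (X.map (𝟙 m) x) = Quotient.mk (A.orbitSetoid m) x
      rw [hx]
  map_comp {m₁ m₂ m₃} φ ψ := by
    ext z
    induction z using Quotient.inductionOn with
    | h x =>
      have hx : X.map (φ ≫ ψ) x = X.map ψ (X.map φ x) := by
        rw [X.map_comp]; rfl
      show Quotient.mk (A.orbitSetoid m₃) (X.map (φ ≫ ψ) x)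
        = Quotient.mk (A.orbitSetoid m₃) (X.map ψ (X.map φ x))
      rw [hx]

/-- The projection `X → X/G`. -/
def proj : X ⟶ A.quotient where
  app m := TypeCat.ofHom fun x => Quotient.mk (A.orbitSetoid m) x
  naturality m₁ m₂ φ := rfl

end SimplicialGroupAction

/-! ### Auxiliary lemmas for the proof -/

section KanAux

open CategoryTheory Simplicial SSet Opposite SimplexCategory

variable (G : SimplexCategoryᵒᵖ ⥤ GrpCat.{0})

lemma horn_face_coe {n : ℕ} (i j : Fin (n + 2)) (h : j ≠ i) :
    (horn.face.{0} i j h).1 = stdSimplex.objEquiv.symm (δ j) := by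
  apply stdSimplex.objEquiv.injective
  rfl

lemma GA_mapmap {a b c : SimplexCategoryᵒᵖ} (φ : a ⟶ b) (ψ : b ⟶ c) (g : G.obj a) :
    G.map ψ (G.map φ g) = G.map (φ ≫ ψ) g := by
  rw [G.map_comp]; rfl

lemma GA_map_id_apply {a : SimplexCategoryᵒᵖ} (φ : a ⟶ a) (h : φ = 𝟙 a) (g : G.obj a) :
    G.map φ g = g := by rw [h, G.map_id]; rfl

lemma GA_fill_succ {m : ℕ} (i : Fin (m + 3))
    (x : ∀ j : Fin (m + 3), j ≠ i → G.obj (op ⦋m + 1⦌))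
    (compat : ∀ (j l : Fin (m + 2)), j ≤ l → ∀ (hj : j.castSucc ≠ i) (hl : l.succ ≠ i),
      G.map (δ j).op (x l.succ hl) = G.map (δ l).op (x j.castSucc hj)) :
    ∃ g : G.obj (op ⦋m + 2⦌), ∀ (j : Fin (m + 3)) (hj : j ≠ i),
      G.map (δ j).op g = x j hj := by
  have xeq : ∀ {j j' : Fin (m + 3)} (h : j = j') (hj : j ≠ i),
      x j hj = x j' (h ▸ hj) := by
    intro j j' h hj; cases h; rfl
  -- ascending phase
  have asc : ∀ a : ℕ, a ≤ i.val → ∃ w : G.obj (op ⦋m + 2⦌),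
      ∀ (j : Fin (m + 3)) (hj : j ≠ i), j.val < a → G.map (δ j).op w = x j hj := by
    intro a
    induction a with
    | zero => exact fun _ => ⟨1, fun j hj hja => absurd hja (by omega)⟩
    | succ a ih =>
      intro ha
      obtain ⟨w, hw⟩ := ih (by omega)
      have ham : a < m + 2 := by have := i.isLt; omega
      set aF : Fin (m + 2) := ⟨a, ham⟩ with haF
      have hne : aF.castSucc ≠ i := by
        intro h
        have := congrArg Fin.val h
        simp [aF] at this
        omega
      refine ⟨w * G.map (SimplexCategory.σ aF).op ((G.map (δ aF.castSucc).op w)⁻¹ * x aF.castSucc hne), ?_⟩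
      intro j hj hja
      rw [map_mul]
      rcases Nat.lt_succ_iff_lt_or_eq.mp hja with hja' | hja'
      · -- j < a : the new factor has trivial j-th face
        have hb : j.val < m + 2 := by omega
        have hjb : j = (⟨j.val, hb⟩ : Fin (m + 2)).castSucc := by ext; simp
        set b : Fin (m + 2) := ⟨j.val, hb⟩ with hbdef
        have ha1 : a - 1 < m + 1 := by omega
        set c : Fin (m + 1) := ⟨a - 1, ha1⟩ with hcdef
        have hac : aF = c.succ := by ext; simp [aF, c]; omega
        have hbc : b ≤ c.castSucc := by
          rw [Fin.le_def]; simp [b, c]; omega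
        have hsc : aF.castSucc = (c.castSucc).succ := by
          rw [hac, Fin.succ_castSucc]
        have hid1 : δ j ≫ SimplexCategory.σ aF = SimplexCategory.σ c ≫ δ b := by
          rw [hjb, hac]; exact δ_comp_σ_of_le hbc
        have swap1 : G.map (δ j).op
              (G.map (SimplexCategory.σ aF).op ((G.map (δ aF.castSucc).op w)⁻¹ * x aF.castSucc hne))
            = G.map (SimplexCategory.σ c).op (G.map (δ b).op
              ((G.map (δ aF.castSucc).op w)⁻¹ * x aF.castSucc hne)) := by
          rw [GA_mapmap, GA_mapmap, ← op_comp, ← op_comp, hid1]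
        rw [swap1]
        have hid2 : δ b ≫ δ aF.castSucc = δ c.castSucc ≫ δ b.castSucc := by
          rw [hsc]; exact δ_comp_δ hbc
        have inner : G.map (δ b).op ((G.map (δ aF.castSucc).op w)⁻¹ * x aF.castSucc hne)
            = 1 := by
          rw [map_mul, map_inv]
          have swap2 : G.map (δ b).op (G.map (δ aF.castSucc).op w)
              = G.map (δ c.castSucc).op (G.map (δ b.castSucc).op w) := by
            rw [GA_mapmap, GA_mapmap, ← op_comp, ← op_comp, hid2]
          have hcomp := compat b c.castSucc hbc (hjb ▸ hj) (hsc ▸ hne)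
          rw [swap2, xeq hsc hne, hcomp]
          rw [hw (b.castSucc) (hjb ▸ hj) (by simpa [b] using hja')]
          exact inv_mul_cancel _
        rw [inner, map_one, mul_one]
        exact hw j hj hja'
      · -- j = a : new face is correct
        have hjb : j = aF.castSucc := by ext; simp [aF]; omega
        subst hjb
        have : G.map (δ aF.castSucc).op
              (G.map (SimplexCategory.σ aF).op ((G.map (δ aF.castSucc).op w)⁻¹ * x aF.castSucc hne))
            = (G.map (δ aF.castSucc).op w)⁻¹ * x aF.castSucc hne := by
          rw [GA_mapmap, ← op_comp]
          exact GA_map_id_apply G _ (by rw [δ_comp_σ_self, op_id]) _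
        rw [this, ← mul_assoc, mul_inv_cancel, one_mul]
  -- descending phase
  have desc : ∀ d : ℕ, d ≤ m + 2 - i.val → ∃ z : G.obj (op ⦋m + 2⦌),
      ∀ (j : Fin (m + 3)) (hj : j ≠ i), (j.val < i.val ∨ m + 3 - d ≤ j.val) →
        G.map (δ j).op z = x j hj := by
    intro d
    induction d with
    | zero =>
      intro _
      obtain ⟨w, hw⟩ := asc i.val le_rfl
      exact ⟨w, fun j hj hcond => hw j hj (by rcases hcond with h | h; exact h; omega)⟩
    | succ d ih =>
      intro hd
      obtain ⟨z, hz⟩ := ih (by omega)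
      have hiv : i.val < m + 2 - d := by omega
      have hrm : m + 2 - d < m + 3 := by omega
      set rF : Fin (m + 3) := ⟨m + 2 - d, hrm⟩ with hrF
      have hr : rF ≠ i := by
        intro h; have := congrArg Fin.val h; simp [rF] at this; omega
      have hre : m + 2 - d - 1 < m + 2 := by omega
      set e : Fin (m + 2) := ⟨m + 2 - d - 1, hre⟩ with hedef
      have hrFe : rF = e.succ := by ext; simp [rF, e]; omega
      refine ⟨z * G.map (SimplexCategory.σ e).op ((G.map (δ rF).op z)⁻¹ * x rF hr), ?_⟩
      intro j hj hcond
      rw [map_mul]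
      have hjcase : j.val < i.val ∨ j.val = m + 2 - d ∨ m + 3 - d ≤ j.val := by omega
      rcases hjcase with hjlt | hjeq | hjgt
      · -- j < i : old low face
        have hb : j.val < m + 2 := by omega
        have hjb : j = (⟨j.val, hb⟩ : Fin (m + 2)).castSucc := by ext; simp
        set b : Fin (m + 2) := ⟨j.val, hb⟩ with hbdef
        have hc1 : m + 2 - d - 2 < m + 1 := by omega
        set c : Fin (m + 1) := ⟨m + 2 - d - 2, hc1⟩ with hcdef
        have hec : e = c.succ := by ext; simp [e, c]; omega
        have hbc : b ≤ c.castSucc := by rw [Fin.le_def]; simp [b, c]; omega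
        have hid1 : δ j ≫ SimplexCategory.σ e = SimplexCategory.σ c ≫ δ b := by
          rw [hjb, hec]; exact δ_comp_σ_of_le hbc
        have swap1 : G.map (δ j).op
              (G.map (SimplexCategory.σ e).op ((G.map (δ rF).op z)⁻¹ * x rF hr))
            = G.map (SimplexCategory.σ c).op (G.map (δ b).op ((G.map (δ rF).op z)⁻¹ * x rF hr)) := by
          rw [GA_mapmap, GA_mapmap, ← op_comp, ← op_comp, hid1]
        rw [swap1]
        have hid2 : δ b ≫ δ rF = δ e ≫ δ b.castSucc := by
          rw [hrFe]; exact δ_comp_δ (by rw [Fin.le_def]; simp [b, e]; omega)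
        have inner : G.map (δ b).op ((G.map (δ rF).op z)⁻¹ * x rF hr) = 1 := by
          rw [map_mul, map_inv]
          have swap2 : G.map (δ b).op (G.map (δ rF).op z)
              = G.map (δ e).op (G.map (δ b.castSucc).op z) := by
            rw [GA_mapmap, GA_mapmap, ← op_comp, ← op_comp, hid2]
          have hcomp := compat b e (by rw [Fin.le_def]; simp [b, e]; omega)
            (hjb ▸ hj) (hrFe ▸ hr)
          rw [swap2, xeq hrFe hr, hcomp]
          rw [hz (b.castSucc) (hjb ▸ hj) (Or.inl (by simpa [b] using hjlt))]
          exact inv_mul_cancel _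
        rw [inner, map_one, mul_one]
        exact hz j hj (Or.inl hjlt)
      · -- j = r : new face
        have hjb : j = rF := by ext; simp [rF]; omega
        subst hjb
        have : G.map (δ rF).op
              (G.map (SimplexCategory.σ e).op ((G.map (δ rF).op z)⁻¹ * x rF hr))
            = (G.map (δ rF).op z)⁻¹ * x rF hr := by
          rw [GA_mapmap, ← op_comp]
          exact GA_map_id_apply G _ (by rw [δ_comp_σ_succ' hrFe, op_id]) _
        rw [this, ← mul_assoc, mul_inv_cancel, one_mul]
      · -- j > r : old high face
        have hb : j.val - 1 < m + 2 := by omega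
        set b : Fin (m + 2) := ⟨j.val - 1, hb⟩ with hbdef
        have hjb : j = b.succ := by ext; simp [b]; omega
        have hf1 : m + 2 - d - 1 < m + 1 := by omega
        set f : Fin (m + 1) := ⟨m + 2 - d - 1, hf1⟩ with hfdef
        have hef : e = f.castSucc := by ext; simp [e, f]
        have hfb : f.castSucc < b := by rw [Fin.lt_def]; simp [b, f]; omega
        have hid1 : δ j ≫ SimplexCategory.σ e = SimplexCategory.σ f ≫ δ b := by
          rw [hjb, hef]; exact δ_comp_σ_of_gt hfb
        have swap1 : G.map (δ j).op
              (G.map (SimplexCategory.σ e).op ((G.map (δ rF).op z)⁻¹ * x rF hr))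
            = G.map (SimplexCategory.σ f).op (G.map (δ b).op ((G.map (δ rF).op z)⁻¹ * x rF hr)) := by
          rw [GA_mapmap, GA_mapmap, ← op_comp, ← op_comp, hid1]
        rw [swap1]
        have hrm1 : m + 2 - d < m + 2 := by omega
        set rF' : Fin (m + 2) := ⟨m + 2 - d, hrm1⟩ with hrF'
        have hrFc : rF = rF'.castSucc := by ext; simp [rF, rF']
        have hrb : rF' ≤ b := by rw [Fin.le_def]; simp [rF', b]; omega
        have hid2 : δ b ≫ δ rF = δ rF' ≫ δ b.succ := by
          rw [hrFc]; exact (δ_comp_δ hrb).symm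
        have inner : G.map (δ b).op ((G.map (δ rF).op z)⁻¹ * x rF hr) = 1 := by
          rw [map_mul, map_inv]
          have swap2 : G.map (δ b).op (G.map (δ rF).op z)
              = G.map (δ rF').op (G.map (δ b.succ).op z) := by
            rw [GA_mapmap, GA_mapmap, ← op_comp, ← op_comp, hid2]
          have hcomp := compat rF' b hrb (hrFc ▸ hr) (hjb ▸ hj)
          rw [swap2, xeq hrFc hr, ← hcomp]
          rw [hz (b.succ) (hjb ▸ hj) (Or.inr (by simp [b]; omega))]
          exact inv_mul_cancel _
        rw [inner, map_one, mul_one]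
        exact hz j hj (Or.inr (by omega))
  obtain ⟨z, hz⟩ := desc (m + 2 - i.val) le_rfl
  exact ⟨z, fun j hj => hz j hj (by
    rcases Nat.lt_or_ge j.val i.val with h | h
    · exact Or.inl h
    · refine Or.inr ?_
      have : j.val ≠ i.val := fun hc => hj (Fin.ext hc)
      omega)⟩

lemma GA_fill_zero (i : Fin 2) (x : ∀ j : Fin 2, j ≠ i → G.obj (op ⦋0⦌)) :
    ∃ g : G.obj (op ⦋1⦌), ∀ (j : Fin 2) (hj : j ≠ i),
      G.map (δ j).op g = x j hj := by
  obtain ⟨j₀, hj₀⟩ : ∃ j₀ : Fin 2, j₀ ≠ i := by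
    fin_cases i
    exacts [⟨1, by decide⟩, ⟨0, by decide⟩]
  refine ⟨G.map (SimplexCategory.σ 0).op (x j₀ hj₀), ?_⟩
  intro j hj
  have hjj : j = j₀ := by
    have h1 := Fin.val_ne_of_ne hj
    have h2 := Fin.val_ne_of_ne hj₀
    ext
    omega
  subst hjj
  rw [GA_mapmap, ← op_comp]
  rw [show x j hj₀ = x j hj from rfl]
  exact GA_map_id_apply G _ (by rw [hom_zero_zero (δ j ≫ SimplexCategory.σ 0), op_id]) _

/-- Horn filling in an arbitrary simplicial group (Moore's theorem, the form we need). -/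
lemma GA_fill_all (n : ℕ) (i : Fin (n + 2))
    (g : ∀ j : Fin (n + 2), j ≠ i → G.obj (op ⦋n⦌))
    (compat : ∀ {k : SimplexCategory} (φ ψ : k ⟶ ⦋n⦌) (j l : Fin (n + 2))
      (hj : j ≠ i) (hl : l ≠ i), φ ≫ δ j = ψ ≫ δ l →
        G.map φ.op (g j hj) = G.map ψ.op (g l hl)) :
    ∃ gg : G.obj (op ⦋n + 1⦌), ∀ (j : Fin (n + 2)) (hj : j ≠ i),
      G.map (δ j).op gg = g j hj := by
  obtain _ | m := n
  · exact GA_fill_zero G i g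
  · exact GA_fill_succ G i g (fun j l hjl hj hl =>
      compat (δ j) (δ l) l.succ j.castSucc hl hj (δ_comp_δ hjl))

/-- The simplicial map `Δ[n] ⟶ X` classified by an `n`-simplex of `X`. -/
def ofSimplex {X : SSet.{0}} {n : ℕ} (z : X _⦋n⦌) : Δ[n] ⟶ X where
  app m := TypeCat.ofHom fun α => X.map (stdSimplex.objEquiv α).op z
  naturality m₁ m₂ φ := by
    ext α
    show X.map (stdSimplex.objEquiv (Δ[n].map φ α)).op z
      = X.map φ (X.map (stdSimplex.objEquiv α).op z)
    rw [stdSimplex.map_apply, Equiv.apply_symm_apply, op_comp,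
      Quiver.Hom.op_unop, FunctorToTypes.map_comp_apply]

lemma standardSimplex_self (n : ℕ) (m : SimplexCategoryᵒᵖ) (α : Δ[n].obj m) :
    Δ[n].map (stdSimplex.objEquiv α).op (stdSimplex.objEquiv.symm (𝟙 ⦋n⦌)) = α := by
  apply stdSimplex.objEquiv.injective
  rw [stdSimplex.map_apply, Equiv.apply_symm_apply, Quiver.Hom.unop_op,
    Equiv.apply_symm_apply, Category.comp_id]


/-- Every simplicial map `Δ[n] ⟶ X` is of the form `ofSimplex` of its value on `id n`. -/
lemma ofSimplex_unique {X : SSet.{0}} {n : ℕ} (f : Δ[n] ⟶ X) :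
    f = ofSimplex (f.app (op ⦋n⦌) (stdSimplex.objEquiv.symm (𝟙 ⦋n⦌))) := by
  apply NatTrans.ext
  funext m
  ext α
  show f.app m α = X.map (stdSimplex.objEquiv α).op
    (f.app (op ⦋n⦌) (stdSimplex.objEquiv.symm (𝟙 ⦋n⦌)))
  calc f.app m α
      = f.app m (Δ[n].map (stdSimplex.objEquiv α).op (stdSimplex.objEquiv.symm (𝟙 ⦋n⦌))) := by
        rw [standardSimplex_self]
    _ = X.map (stdSimplex.objEquiv α).op
        (f.app (op ⦋n⦌) (stdSimplex.objEquiv.symm (𝟙 ⦋n⦌))) :=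
      NatTrans.naturality_apply f _ _

lemma kan_main {X : SSet.{0}} (A : SimplicialGroupAction X)
    (hfree : ∀ (m : SimplexCategoryᵒᵖ) (g : A.G.obj m) (x : X.obj m),
      A.act m g x = x → g = 1) :
    IsKanFibration A.proj := by
  intro n i u sy hcomm
  -- injectivity of the action
  have act_inj : ∀ (m : SimplexCategoryᵒᵖ) (g g' : A.G.obj m) (y : X.obj m),
      A.act m g y = A.act m g' y → g = g' := by
    intro m g g' y h
    have h2 : A.act m (g'⁻¹ * g) y = y := by
      rw [A.mul_act, h, ← A.mul_act, inv_mul_cancel, A.one_act]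
    have h3 := hfree m _ y h2
    rwa [inv_mul_eq_one, eq_comm] at h3
  -- representative of the base simplex
  obtain ⟨e, he⟩ := Quotient.exists_rep (sy.app (op ⦋n + 1⦌) (stdSimplex.objEquiv.symm (𝟙 ⦋n + 1⦌)))
  -- each horn face lies in the orbit of the corresponding face of `e`
  have hface : ∀ (j : Fin (n + 2)) (hj : j ≠ i),
      Quotient.mk (A.orbitSetoid (op ⦋n⦌)) (u.app (op ⦋n⦌) (horn.face i j hj))
        = Quotient.mk (A.orbitSetoid (op ⦋n⦌)) (X.map (SimplexCategory.δ j).op e) := by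
    intro j hj
    have h1 := types_congr_hom (congr_app hcomm (op ⦋n⦌)) (horn.face i j hj)
    simp only [NatTrans.comp_app, types_comp_apply] at h1
    have h2 : (Λ[n + 1, i].ι).app (op ⦋n⦌) (horn.face i j hj)
        = Δ[n + 1].map (SimplexCategory.δ j).op (stdSimplex.objEquiv.symm (𝟙 ⦋n + 1⦌)) := by
      show (horn.face i j hj).1 = _
      rw [horn_face_coe, stdSimplex.map_apply, Quiver.Hom.unop_op,
        Equiv.apply_symm_apply, Category.comp_id]
    show A.proj.app (op ⦋n⦌) (u.app (op ⦋n⦌) (horn.face i j hj)) = _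
    rw [h1, h2, NatTrans.naturality_apply sy, ← he]
    rfl
  -- choose the translating group elements
  have horb : ∀ (j : Fin (n + 2)) (hj : j ≠ i),
      ∃ g : A.G.obj (op ⦋n⦌),
        A.act (op ⦋n⦌) g (X.map (SimplexCategory.δ j).op e)
          = u.app (op ⦋n⦌) (horn.face i j hj) := by
    intro j hj
    obtain ⟨g, hgr⟩ := Quotient.exact (hface j hj)
    exact ⟨g⁻¹, by rw [← hgr, ← A.mul_act, inv_mul_cancel, A.one_act]⟩
  choose g hg using horb
  -- compatibility of the translating elements
  have gcompat : ∀ {k : SimplexCategory} (φ ψ : k ⟶ ⦋n⦌) (j l : Fin (n + 2))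
      (hj : j ≠ i) (hl : l ≠ i), φ ≫ SimplexCategory.δ j = ψ ≫ SimplexCategory.δ l →
        A.G.map φ.op (g j hj) = A.G.map ψ.op (g l hl) := by
    intro k φ ψ j l hj hl hrel
    have hpt : X.map φ.op (X.map (SimplexCategory.δ j).op e)
        = X.map ψ.op (X.map (SimplexCategory.δ l).op e) := by
      rw [← FunctorToTypes.map_comp_apply, ← FunctorToTypes.map_comp_apply,
        ← op_comp, ← op_comp, hrel]
    have hx : X.map φ.op (u.app (op ⦋n⦌) (horn.face i j hj))
        = X.map ψ.op (u.app (op ⦋n⦌) (horn.face i l hl)) := by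
      have hn1 := NatTrans.naturality_apply u φ.op (horn.face i j hj)
      have hn2 := NatTrans.naturality_apply u ψ.op (horn.face i l hl)
      rw [← hn1, ← hn2]
      apply congrArg
      apply Subtype.ext
      show Δ[n + 1].map φ.op (horn.face i j hj).1 = Δ[n + 1].map ψ.op (horn.face i l hl).1
      rw [horn_face_coe, horn_face_coe, stdSimplex.map_apply, stdSimplex.map_apply,
        Equiv.apply_symm_apply, Equiv.apply_symm_apply, Quiver.Hom.unop_op, Quiver.Hom.unop_op,
        hrel]
    apply act_inj (op k) _ _ (X.map φ.op (X.map (SimplexCategory.δ j).op e))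
    rw [← A.map_act φ.op, hg j hj, hpt, ← A.map_act ψ.op, hg l hl]
    exact hx
  -- fill the horn of translating elements in the simplicial group
  obtain ⟨gg, hgg⟩ := GA_fill_all A.G n i g
    (fun {k} φ ψ j l hj hl h => gcompat φ ψ j l hj hl h)
  -- the lift
  refine ⟨ofSimplex (A.act (op ⦋n + 1⦌) gg e), ?_, ?_⟩
  · -- restricts to the horn map
    apply horn.hom_ext
    intro j hj
    show X.map (stdSimplex.objEquiv ((horn.face i j hj).1)).op
        (A.act (op ⦋n + 1⦌) gg e) = u.app (op ⦋n⦌) (horn.face i j hj)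
    rw [horn_face_coe, Equiv.apply_symm_apply, A.map_act, hgg j hj]
    exact hg j hj
  · -- covers the base simplex
    rw [ofSimplex_unique sy, ← he]
    apply NatTrans.ext
    funext m
    ext α
    show Quotient.mk (A.orbitSetoid m)
        (X.map (stdSimplex.objEquiv α).op (A.act (op ⦋n + 1⦌) gg e))
      = A.quotient.map (stdSimplex.objEquiv α).op
          (Quotient.mk (A.orbitSetoid (op ⦋n + 1⦌)) e)
    rw [A.map_act]
    have hrel2 : (A.orbitSetoid m).r
        (X.map (stdSimplex.objEquiv α).op e)
        (A.act m (A.G.map (stdSimplex.objEquiv α).op gg)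
          (X.map (stdSimplex.objEquiv α).op e)) := ⟨_, rfl⟩
    exact (Quotient.sound hrel2).symm

end KanAux


/-- **Free simplicial group actions yield Kan fibrations.**
If a simplicial group `G` acts simplicially on a simplicial set `X` and the action of each
`Gₙ` on `Xₙ` is free, then the projection `X → X/G` to the levelwise quotient is a Kan
fibration. -/
theorem kanFibration_of_free_simplicialGroupAction
    {X : SSet.{0}} (A : SimplicialGroupAction X)
    (hfree : ∀ (m : SimplexCategoryᵒᵖ) (g : A.G.obj m) (x : X.obj m),
      A.act m g x = x → g = 1) :
    IsKanFibration A.proj :=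
  kan_main A hfree

end SimplicialGroupKan
end
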